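/- Let A = (A,f) and B = (B,g) be connected monounary algebras whose cores are both isomorphic to C_n for some positive n ∈ ℕ, and let ⟨T^A_i : i < n⟩ and ⟨T^B_i : i < n⟩ be tree-algebra decompositions of A and B, indexed compatibly along the cycle (that is, the roots r^A_0,…,r^A_{n−1} and r^B_0,…,r^B_{n−1} satisfy f(r^A_i) = r^A_{(i+1) mod n} and g(r^B_i) = r^B_{(i+1) mod n}). Then dis(A,B) = min over k < n of Σ_{i<n} dis(T^A_i, T^B_{(i+k) mod n}), computed in ℕ ∪ {∞}. -/

import Mathlib

/-- A monounary algebra: a type equipped with one unary operation. -/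
structure MonoUnary : Type 1 where
  carrier : Type
  op : carrier → carrier

namespace MonoUnary

/-- The subalgebra of `A` generated by `X`: the closure of `X` under the operation. -/
def closure (A : MonoUnary) (X : Set A.carrier) : Set A.carrier :=
  {y | ∃ x ∈ X, ∃ n : ℕ, A.op^[n] x = y}

/-- Isomorphism of monounary algebras. -/
def Iso (A B : MonoUnary) : Prop :=
  ∃ e : A.carrier ≃ B.carrier, ∀ x, e (A.op x) = B.op (e x)

/-- The monounary algebra induced on a subset closed under the operation. -/
def restrict (B : MonoUnary) (S : Set B.carrier) (hS : ∀ x ∈ S, B.op x ∈ S) : MonoUnary where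
  carrier := ↥S
  op := fun x => ⟨B.op x.1, hS x.1 x.2⟩

/-- `A` is largely embeddable into `B`: `B` has a large subalgebra isomorphic to `A`,
i.e. a (nonempty, closed) subset `S` such that together with one extra element `b`
it generates the whole of `B`. -/
def LargeEmb (A B : MonoUnary) : Prop :=
  ∃ (S : Set B.carrier) (hS : ∀ x ∈ S, B.op x ∈ S), S.Nonempty ∧
    Iso A (B.restrict S hS) ∧ ∃ b : B.carrier, B.closure (S ∪ {b}) = Set.univ

/-- One step in the network of large embeddings (symmetric closure of `⋖`). -/
def Step (A B : MonoUnary) : Prop := LargeEmb A B ∨ LargeEmb B A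

/-- There is a path of length `n` between `A` and `B` in the network. -/
def HasPath (A B : MonoUnary) (n : ℕ) : Prop :=
  ∃ C : ℕ → MonoUnary, Iso (C 0) A ∧ Iso (C n) B ∧ ∀ i < n, Step (C i) (C (i + 1))

/-- The generator distance between monounary algebras, in `ℕ ∪ {∞}`. -/
noncomputable def dis (A B : MonoUnary) : ℕ∞ :=
  sInf {q : ℕ∞ | ∃ n : ℕ, q = (n : ℕ∞) ∧ HasPath A B n}

/-- The minimum number of generators of `A`, `∞` if `A` is not finitely generated. -/
noncomputable def MGen (A : MonoUnary) : ℕ∞ :=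
  sInf {q : ℕ∞ | ∃ X : Finset A.carrier, q = (X.card : ℕ∞) ∧ A.closure ↑X = Set.univ}

/-- A monounary algebra is connected iff any two elements have trajectories that meet. -/
def Connected (A : MonoUnary) : Prop :=
  ∀ a b : A.carrier, ∃ k m : ℕ, A.op^[k] a = A.op^[m] b

end MonoUnary

namespace MonoUnary

/-- `A` has core `C_n`: `n` is the least positive natural number such that
`f^[n] a = a` for some `a`. -/
def HasCoreC (A : MonoUnary) (n : ℕ) : Prop :=
  0 < n ∧ (∃ a, A.op^[n] a = a) ∧ ∀ m : ℕ, 0 < m → (∃ a, A.op^[m] a = a) → n ≤ m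

/-- Given the cycle `r : Fin n → A.carrier` of a connected monounary algebra with core
`C_n`, `treeSet A r i` is the set of elements whose trajectory first meets the cycle at
`r i`. -/
def treeSet (A : MonoUnary) {n : ℕ} (r : Fin n → A.carrier) (i : Fin n) : Set A.carrier :=
  {x | ∃ k : ℕ, A.op^[k] x = r i ∧ ∀ j < k, A.op^[j] x ∉ Set.range r}

/-- The `i`-th member of the tree-algebra decomposition: the algebra on `treeSet A r i`
whose operation fixes `r i` and agrees with `A.op` elsewhere. -/
noncomputable def treeComp (A : MonoUnary) {n : ℕ} (r : Fin n → A.carrier) (i : Fin n) : MonoUnary where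
  carrier := ↥(treeSet A r i)
  op := fun x =>
    letI : DecidableEq A.carrier := Classical.decEq _
    if hx : (x : A.carrier) = r i then x
    else
      ⟨A.op x.1, by
        obtain ⟨k, hk, hlt⟩ := x.2
        cases k with
        | zero => simp only [Function.iterate_zero_apply] at hk; exact absurd hk hx
        | succ k' =>
          refine ⟨k', ?_, ?_⟩
          · rw [← Function.iterate_succ_apply]; exact hk
          · intro j hj
            rw [← Function.iterate_succ_apply]
            exact hlt (j + 1) (Nat.succ_lt_succ hj)⟩

end MonoUnary

namespace MonoUnary

variable {X X' Y Y' Z W : MonoUnary}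

/-! ### Basic lemmas -/

lemma mem_closure_self {S : Set X.carrier} {x : X.carrier} (hx : x ∈ S) : x ∈ X.closure S :=
  ⟨x, hx, 0, rfl⟩

lemma iterate_mem_closure {S : Set X.carrier} {x : X.carrier} (hx : x ∈ S) (k : ℕ) :
    X.op^[k] x ∈ X.closure S := ⟨x, hx, k, rfl⟩

lemma closure_mono {S T : Set X.carrier} (h : S ⊆ T) : X.closure S ⊆ X.closure T := by
  rintro y ⟨x, hx, k, rfl⟩; exact ⟨x, h hx, k, rfl⟩

lemma restrict_iterate (S : Set X.carrier) (hS : ∀ x ∈ S, X.op x ∈ S) (k : ℕ) (x : ↥S) :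
    ((X.restrict S hS).op^[k] x).1 = X.op^[k] x.1 := by
  induction k generalizing x with
  | zero => rfl
  | succ k ih =>
    erw [Function.iterate_succ_apply, Function.iterate_succ_apply]
    exact ih _

lemma iterate_mem_of_closed {S : Set X.carrier} (hS : ∀ x ∈ S, X.op x ∈ S)
    {x : X.carrier} (hx : x ∈ S) (k : ℕ) : X.op^[k] x ∈ S := by
  induction k with
  | zero => exact hx
  | succ k ih => rw [Function.iterate_succ_apply']; exact hS _ ih

/-- closure of a closed set union a singleton -/
lemma closure_union_singleton {S : Set X.carrier} (hS : ∀ x ∈ S, X.op x ∈ S) (b : X.carrier) :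
    X.closure (S ∪ {b}) = S ∪ {y | ∃ k, X.op^[k] b = y} := by
  ext y
  constructor
  · rintro ⟨x, hx | hx, k, rfl⟩
    · exact Or.inl (iterate_mem_of_closed hS hx k)
    · rcases hx with rfl
      exact Or.inr ⟨k, rfl⟩
  · rintro (hy | ⟨k, rfl⟩)
    · exact ⟨y, Or.inl hy, 0, rfl⟩
    · exact ⟨b, Or.inr rfl, k, rfl⟩

/-! ### Iso calculus -/

lemma Iso.refl (X : MonoUnary) : Iso X X := ⟨Equiv.refl _, fun _ => rfl⟩

lemma Iso.symm (h : Iso X Y) : Iso Y X := by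
  obtain ⟨e, he⟩ := h
  refine ⟨e.symm, fun y => ?_⟩
  apply e.injective
  rw [Equiv.apply_symm_apply, he, Equiv.apply_symm_apply]

lemma Iso.trans (h1 : Iso X Y) (h2 : Iso Y Z) : Iso X Z := by
  obtain ⟨e, he⟩ := h1; obtain ⟨f, hf⟩ := h2
  exact ⟨e.trans f, fun x => by simp [he, hf]⟩

lemma Iso.iterate {e : X.carrier ≃ Y.carrier} (he : ∀ x, e (X.op x) = Y.op (e x)) (k : ℕ)
    (x : X.carrier) : e (X.op^[k] x) = Y.op^[k] (e x) := by
  induction k generalizing x with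
  | zero => rfl
  | succ k ih => rw [Function.iterate_succ_apply, Function.iterate_succ_apply, ih, he]

/-! ### v-form of large embeddings -/

/-- A homomorphic embedding. -/
def Emb (X Y : MonoUnary) (v : X.carrier → Y.carrier) : Prop :=
  Function.Injective v ∧ ∀ x, v (X.op x) = Y.op (v x)

lemma Emb.iterate {v : X.carrier → Y.carrier} (hv : Emb X Y v) (k : ℕ) (x : X.carrier) :
    v (X.op^[k] x) = Y.op^[k] (v x) := by
  induction k generalizing x with
  | zero => rfl
  | succ k ih => rw [Function.iterate_succ_apply, Function.iterate_succ_apply, ih, hv.2]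

lemma Emb.range_closed {v : X.carrier → Y.carrier} (hv : Emb X Y v) :
    ∀ y ∈ Set.range v, Y.op y ∈ Set.range v := by
  rintro y ⟨x, rfl⟩; exact ⟨X.op x, hv.2 x⟩

lemma largeEmb_iff {X Y : MonoUnary} :
    LargeEmb X Y ↔ (Nonempty X.carrier ∧ ∃ (v : X.carrier → Y.carrier) (b : Y.carrier),
      Emb X Y v ∧ Y.closure (Set.range v ∪ {b}) = Set.univ) := by
  constructor
  · rintro ⟨S, hS, ⟨s, hs⟩, ⟨e, he⟩, b, hb⟩
    refine ⟨⟨e.symm ⟨s, hs⟩⟩, fun x => (e x).1, b, ⟨?_, ?_⟩, ?_⟩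
    · intro x y hxy
      exact e.injective (Subtype.ext hxy)
    · intro x
      show (e (X.op x)).1 = Y.op (e x).1
      rw [he]; rfl
    · have : Set.range (fun x => (e x).1) = S := by
        ext y; constructor
        · rintro ⟨x, rfl⟩; exact (e x).2
        · intro hy; exact ⟨e.symm ⟨y, hy⟩, congrArg Subtype.val (e.apply_symm_apply ⟨y, hy⟩)⟩
      rw [this]; exact hb
  · rintro ⟨⟨x0⟩, v, b, hv, hb⟩
    refine ⟨Set.range v, hv.range_closed, ⟨v x0, ⟨x0, rfl⟩⟩, ?_, b, hb⟩
    refine ⟨Equiv.ofBijective (fun x => ⟨v x, ⟨x, rfl⟩⟩) ⟨fun a b hab => hv.1 (congrArg Subtype.val hab), ?_⟩, ?_⟩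
    · rintro ⟨y, x, rfl⟩; exact ⟨x, rfl⟩
    · intro x
      apply Subtype.ext
      simp only [Equiv.ofBijective_apply, restrict]
      exact hv.2 x

/-- Iso from a bijective homomorphism. -/
lemma iso_of_bij {v : X.carrier → Y.carrier} (hv : Emb X Y v) (hsurj : Function.Surjective v) :
    Iso X Y :=
  ⟨Equiv.ofBijective v ⟨hv.1, hsurj⟩, fun x => hv.2 x⟩

lemma Iso.emb (h : Iso X Y) : ∃ v, Emb X Y v ∧ Function.Surjective v := by
  obtain ⟨e, he⟩ := h
  exact ⟨e, ⟨e.injective, he⟩, e.surjective⟩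

lemma Emb.comp {v : X.carrier → Y.carrier} {w : Y.carrier → Z.carrier}
    (hv : Emb X Y v) (hw : Emb Y Z w) : Emb X Z (w ∘ v) :=
  ⟨hw.1.comp hv.1, fun x => by simp [Function.comp, hv.2, hw.2]⟩

/-! ### congruence of LargeEmb and Step under Iso -/

lemma closure_image_iso {e : Y'.carrier ≃ Y.carrier} (he : ∀ x, e (Y'.op x) = Y.op (e x))
    (T : Set Y'.carrier) : Y.closure (⇑e '' T) = ⇑e '' (Y'.closure T) := by
  ext y
  constructor
  · rintro ⟨x, ⟨t, ht, rfl⟩, k, rfl⟩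
    exact ⟨Y'.op^[k] t, ⟨t, ht, k, rfl⟩, Iso.iterate he k t⟩
  · rintro ⟨x, ⟨t, ht, k, rfl⟩, rfl⟩
    exact ⟨e t, ⟨t, ht, rfl⟩, k, (Iso.iterate he k t).symm⟩

lemma LargeEmb.congr_left (h : Iso X X') (hle : LargeEmb X' Y) : LargeEmb X Y := by
  rw [largeEmb_iff] at hle ⊢
  obtain ⟨⟨x0⟩, v, b, hv, hb⟩ := hle
  obtain ⟨e, he⟩ := h
  have hemb : Emb X X' e := ⟨e.injective, he⟩
  refine ⟨⟨e.symm x0⟩, v ∘ e, b, hemb.comp hv, ?_⟩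
  have : Set.range (v ∘ ⇑e) = Set.range v := by
    rw [Set.range_comp, e.range_eq_univ, Set.image_univ]
  rw [this]; exact hb

lemma LargeEmb.congr_right (h : Iso Y Y') (hle : LargeEmb X Y') : LargeEmb X Y := by
  rw [largeEmb_iff] at hle ⊢
  obtain ⟨hne, v, b, hv, hb⟩ := hle
  obtain ⟨e, he⟩ := h.symm
  refine ⟨hne, ⇑e ∘ v, e b, hv.comp ⟨e.injective, he⟩, ?_⟩
  have h1 : Set.range (⇑e ∘ v) ∪ {e b} = ⇑e '' (Set.range v ∪ {b}) := by
    rw [Set.image_union, Set.image_singleton, Set.range_comp]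
  rw [h1, closure_image_iso he, hb, Set.image_univ, e.range_eq_univ]

lemma Step.symm (h : Step X Y) : Step Y X := h.elim Or.inr Or.inl

lemma Step.congr_left (h : Iso X X') (hs : Step X' Y) : Step X Y := by
  rcases hs with hs | hs
  · exact Or.inl (hs.congr_left h)
  · exact Or.inr (hs.congr_right h)

lemma Step.congr_right (h : Iso Y Y') (hs : Step X Y') : Step X Y :=
  (hs.symm.congr_left h).symm

lemma step_self (h : Nonempty X.carrier) : Step X X := by
  refine Or.inl ⟨Set.univ, fun x _ => trivial, ⟨h.some, trivial⟩, ?_, h.some, ?_⟩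
  · exact ⟨(Equiv.Set.univ _).symm, fun x => rfl⟩
  · ext y; simp only [Set.mem_univ, iff_true]
    exact ⟨y, Or.inl trivial, 0, rfl⟩

lemma step_of_iso (h : Iso X Y) (hne : Nonempty X.carrier) : Step X Y :=
  (step_self hne).congr_right h.symm |>.symm.symm

end MonoUnary
namespace MonoUnary

variable {X X' Y Y' Z W : MonoUnary}

/-! ### Good algebras -/

def Good (n : ℕ) (X : MonoUnary) : Prop := Connected X ∧ HasCoreC X n

/-- `a` is a periodic point of exact period `n`. -/
def NCyc (n : ℕ) (X : MonoUnary) (a : X.carrier) : Prop :=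
  X.op^[n] a = a ∧ ∀ m : ℕ, 0 < m → X.op^[m] a = a → n ≤ m

lemma Good.nonempty {n : ℕ} (h : Good n X) : Nonempty X.carrier := ⟨h.2.2.1.choose⟩

lemma Good.exists_ncyc {n : ℕ} (h : Good n X) : ∃ a, NCyc n X a := by
  obtain ⟨a, ha⟩ := h.2.2.1
  exact ⟨a, ha, fun m hm hma => h.2.2.2 m hm ⟨a, hma⟩⟩

lemma per_iterate {p : ℕ} {a : X.carrier} (h : X.op^[p] a = a) (t : ℕ) : X.op^[p * t] a = a := by
  induction t with
  | zero => rfl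
  | succ t ih => rw [Nat.mul_succ, Function.iterate_add_apply, h, ih]

lemma back_to_self {n : ℕ} {a : X.carrier} (h : X.op^[n] a = a) (hn : 0 < n) (k : ℕ) :
    ∃ j, X.op^[j] (X.op^[k] a) = a := by
  refine ⟨n * (k + 1) - k, ?_⟩
  rw [← Function.iterate_add_apply]
  have hk : k ≤ n * (k + 1) := le_trans (Nat.le_succ k) (Nat.le_mul_of_pos_left _ hn)
  rw [Nat.sub_add_cancel hk]
  exact per_iterate h (k + 1)

lemma Connected.congr (h : Iso X Y) (hX : Connected X) : Connected Y := by
  obtain ⟨e, he⟩ := h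
  intro a b
  obtain ⟨k, m, hkm⟩ := hX (e.symm a) (e.symm b)
  refine ⟨k, m, ?_⟩
  have h1 := congrArg e hkm
  rw [Iso.iterate he, Iso.iterate he, e.apply_symm_apply, e.apply_symm_apply] at h1
  exact h1

lemma HasCoreC.congr (h : Iso X Y) {n : ℕ} (hX : HasCoreC X n) : HasCoreC Y n := by
  obtain ⟨e, he⟩ := h
  refine ⟨hX.1, ?_, ?_⟩
  · obtain ⟨a, ha⟩ := hX.2.1
    exact ⟨e a, by rw [← Iso.iterate he, ha]⟩
  · intro m hm ⟨a, ha⟩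
    refine hX.2.2 m hm ⟨e.symm a, ?_⟩
    apply e.injective
    rw [Iso.iterate he, e.apply_symm_apply, ha]

lemma Good.congr (h : Iso X Y) {n : ℕ} (hX : Good n X) : Good n Y :=
  ⟨hX.1.congr h, hX.2.congr h⟩

/-! ### paths and dis -/

lemma hasPath_congr_left (h : Iso X X') {m : ℕ} (hp : HasPath X' Y m) : HasPath X Y m := by
  obtain ⟨C, h0, h1, hs⟩ := hp
  exact ⟨C, h0.trans h.symm, h1, hs⟩

lemma hasPath_congr_right (h : Iso Y Y') {m : ℕ} (hp : HasPath X Y' m) : HasPath X Y m := by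
  obtain ⟨C, h0, h1, hs⟩ := hp
  exact ⟨C, h0, h1.trans h.symm, hs⟩

lemma hasPath_symm {m : ℕ} (hp : HasPath X Y m) : HasPath Y X m := by
  obtain ⟨C, h0, h1, hs⟩ := hp
  refine ⟨fun i => C (m - i), by simpa using h1, by simpa using h0, fun i hi => ?_⟩
  have h2 : m - i = (m - (i+1)) + 1 := by omega
  have h3 : m - (i + 1) < m := by omega
  show Step (C (m - i)) (C (m - (i+1)))
  rw [h2]
  exact (hs _ h3).symm

lemma hasPath_of_iso (h : Iso X Y) : HasPath X Y 0 :=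
  ⟨fun _ => X, Iso.refl X, h, fun i hi => absurd hi (Nat.not_lt_zero i)⟩

lemma hasPath_concat {m₁ m₂ : ℕ} (h1 : HasPath X Y m₁) (h2 : HasPath Y Z m₂) :
    HasPath X Z (m₁ + m₂) := by
  rcases Nat.eq_zero_or_pos m₁ with rfl | hm₁
  · obtain ⟨C, hC0, hC1, _⟩ := h1
    have hXY : Iso X Y := (hC0.symm).trans hC1
    simpa using hasPath_congr_left hXY h2
  obtain ⟨C1, hA, hB, hs1⟩ := h1
  obtain ⟨C2, hC, hD, hs2⟩ := h2
  refine ⟨fun i => if i < m₁ then C1 i else C2 (i - m₁), ?_, ?_, ?_⟩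
  · simpa [hm₁] using hA
  · have : ¬ (m₁ + m₂ < m₁) := by omega
    simpa [this] using hD
  · intro i hi
    by_cases h3 : i + 1 < m₁
    · have h4 : i < m₁ := by omega
      simpa [h3, h4] using hs1 i h4
    · by_cases h5 : i < m₁
      · have h6 : i + 1 = m₁ := by omega
        have : ¬ (i + 1 < m₁) := by omega
        simp only [h5, if_pos, this, if_neg, if_false]
        have hstep := hs1 i h5
        rw [h6] at hstep
        have : i + 1 - m₁ = 0 := by omega
        rw [this]
        exact (hstep.congr_right (hC.trans hB.symm)).symm.symm
      · have h7 : ¬ (i + 1 < m₁) := by omega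
        simp only [h5, h7, if_neg, if_false]
        have h8 : i + 1 - m₁ = (i - m₁) + 1 := by omega
        rw [h8]
        exact hs2 _ (by omega)

lemma dis_le_of_hasPath {m : ℕ} (h : HasPath X Y m) : dis X Y ≤ (m : ℕ∞) :=
  sInf_le ⟨m, rfl, h⟩

lemma dis_attained (h : dis X Y ≠ ⊤) : ∃ m : ℕ, (m : ℕ∞) = dis X Y ∧ HasPath X Y m := by
  have hne : {q : ℕ∞ | ∃ n : ℕ, q = (n : ℕ∞) ∧ HasPath X Y n}.Nonempty := by
    by_contra hc
    rw [Set.not_nonempty_iff_eq_empty] at hc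
    apply h
    unfold dis
    rw [hc, sInf_empty]
  obtain ⟨q, m, rfl, hm⟩ := hne
  have hT : {k : ℕ | HasPath X Y k}.Nonempty := ⟨m, hm⟩
  set m₀ := sInf {k : ℕ | HasPath X Y k} with hm₀
  have hmem : HasPath X Y m₀ := Nat.sInf_mem hT
  refine ⟨m₀, ?_, hmem⟩
  apply le_antisymm
  · apply le_sInf
    rintro q ⟨k, rfl, hk⟩
    exact_mod_cast Nat.sInf_le hk
  · exact dis_le_of_hasPath hmem

lemma dis_triangle : dis X Z ≤ dis X Y + dis Y Z := by
  by_cases h1 : dis X Y = ⊤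
  · rw [h1]; simp
  by_cases h2 : dis Y Z = ⊤
  · rw [h2]; simp
  obtain ⟨m1, hm1, hp1⟩ := dis_attained h1
  obtain ⟨m2, hm2, hp2⟩ := dis_attained h2
  rw [← hm1, ← hm2]
  calc dis X Z ≤ ((m1 + m2 : ℕ) : ℕ∞) := dis_le_of_hasPath (hasPath_concat hp1 hp2)
  _ = (m1 : ℕ∞) + m2 := by push_cast; ring

/-! ### connected paths -/

def CPath (n : ℕ) (X Y : MonoUnary) (k : ℕ) : Prop :=
  ∃ C : ℕ → MonoUnary, (∀ i ≤ k, Good n (C i)) ∧ Iso (C 0) X ∧ Iso (C k) Y ∧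
    ∀ i < k, Step (C i) (C (i + 1))

lemma CPath.hasPath {n k : ℕ} (h : CPath n X Y k) : HasPath X Y k := by
  obtain ⟨C, _, h0, h1, hs⟩ := h
  exact ⟨C, h0, h1, hs⟩

lemma cpath_of_iso {n : ℕ} (hg : Good n X) (h : Iso X Y) : CPath n X Y 0 :=
  ⟨fun _ => X, fun i _ => hg, Iso.refl X, h, fun i hi => absurd hi (Nat.not_lt_zero i)⟩

lemma CPath.congr_left {n k : ℕ} (h : Iso X X') (hp : CPath n X' Y k) : CPath n X Y k := by
  obtain ⟨C, hg, h0, h1, hs⟩ := hp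
  exact ⟨C, hg, h0.trans h.symm, h1, hs⟩

lemma CPath.congr_right {n k : ℕ} (h : Iso Y Y') (hp : CPath n X Y' k) : CPath n X Y k := by
  obtain ⟨C, hg, h0, h1, hs⟩ := hp
  exact ⟨C, hg, h0, h1.trans h.symm, hs⟩

lemma CPath.symm {n k : ℕ} (hp : CPath n X Y k) : CPath n Y X k := by
  obtain ⟨C, hg, h0, h1, hs⟩ := hp
  refine ⟨fun i => C (k - i), fun i hi => hg _ (by omega), by simpa using h1, by simpa using h0,
    fun i hi => ?_⟩
  have h2 : k - i = (k - (i+1)) + 1 := by omega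
  show Step (C (k - i)) (C (k - (i+1)))
  rw [h2]
  exact (hs _ (by omega)).symm

lemma CPath.append_step {n k : ℕ} (hp : CPath n X Y k) (hs : Step Y Z) (hg : Good n Z) :
    CPath n X Z (k + 1) := by
  obtain ⟨C, hgC, h0, h1, hsC⟩ := hp
  refine ⟨fun i => if i ≤ k then C i else Z, fun i hi => ?_, ?_, ?_, fun i hi => ?_⟩
  · by_cases h : i ≤ k
    · simpa [h] using hgC i h
    · simpa [h] using hg
  · simpa using h0
  · have h2 : ¬ (k + 1 ≤ k) := by omega
    simpa [h2] using Iso.refl Z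
  · by_cases h : i + 1 ≤ k
    · have h' : i ≤ k := by omega
      simpa [h, h'] using hsC i (by omega)
    · have h2 : i = k := by omega
      subst h2
      have hh : ¬ (i + 1 ≤ i) := by omega
      simp only [le_refl, if_pos, hh, if_neg]
      exact hs.congr_left h1

lemma CPath.concat {n k₁ k₂ : ℕ} (h1 : CPath n X Y k₁) (h2 : CPath n Y Z k₂) :
    CPath n X Z (k₁ + k₂) := by
  induction k₂ generalizing Z with
  | zero =>
    obtain ⟨C, hg, hc0, hc1, _⟩ := h2
    exact CPath.congr_right (hc1.symm.trans hc0) h1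
  | succ k ih =>
    obtain ⟨C, hg, hc0, hc1, hsC⟩ := h2
    have hinit : CPath n Y (C k) k :=
      ⟨C, fun i hi => hg i (by omega), hc0, Iso.refl _, fun i hi => hsC i (by omega)⟩
    have hstep : Step (C k) Z := Step.congr_right hc1.symm (hsC k (by omega))
    have h3 := (ih hinit).append_step hstep ((hg (k+1) (by omega)).congr hc1)
    exact h3

end MonoUnary
namespace MonoUnary

variable {X X' Y Y' Z Z' W : MonoUnary}

/-! ### components -/

def CompSet (Y : MonoUnary) (a : Y.carrier) : Set Y.carrier :=
  {z | ∃ k m : ℕ, Y.op^[k] z = Y.op^[m] a}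

lemma mem_compSet_self (Y : MonoUnary) (a : Y.carrier) : a ∈ Y.CompSet a := ⟨0, 0, rfl⟩

lemma compSet_closed (Y : MonoUnary) (a : Y.carrier) :
    ∀ z ∈ Y.CompSet a, Y.op z ∈ Y.CompSet a := by
  rintro z ⟨k, m, hkm⟩
  refine ⟨k, m + 1, ?_⟩
  rw [← Function.iterate_succ_apply, Function.iterate_succ_apply', Function.iterate_succ_apply',
    hkm]

lemma compSet_comm {a z : Y.carrier} (h : z ∈ Y.CompSet a) : a ∈ Y.CompSet z := by
  obtain ⟨k, m, hkm⟩ := h; exact ⟨m, k, hkm.symm⟩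

lemma compSet_trans {a b c : Y.carrier} (h1 : a ∈ Y.CompSet b) (h2 : b ∈ Y.CompSet c) :
    a ∈ Y.CompSet c := by
  obtain ⟨k, m, h1⟩ := h1
  obtain ⟨k', m', h2⟩ := h2
  refine ⟨k + k', m + m', ?_⟩
  rw [add_comm k k', Function.iterate_add_apply, h1, ← Function.iterate_add_apply,
    add_comm k' m, Function.iterate_add_apply, h2, ← Function.iterate_add_apply, add_comm]

lemma compSet_eq_of_mem {a z : Y.carrier} (h : z ∈ Y.CompSet a) :
    Y.CompSet z = Y.CompSet a := by
  ext w
  exact ⟨fun hw => compSet_trans hw h, fun hw => compSet_trans hw (compSet_comm h)⟩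

lemma compSet_eq_of_not_disjoint {a b : Y.carrier} {z : Y.carrier}
    (hz1 : z ∈ Y.CompSet a) (hz2 : z ∈ Y.CompSet b) : Y.CompSet a = Y.CompSet b := by
  rw [← compSet_eq_of_mem hz1, compSet_eq_of_mem hz2]

lemma iterate_mem_compSet {a z : Y.carrier} (h : z ∈ Y.CompSet a) (k : ℕ) :
    Y.op^[k] z ∈ Y.CompSet a :=
  iterate_mem_of_closed (compSet_closed Y a) h k

lemma mem_compSet_of_iterate {a z : Y.carrier} {k : ℕ} (h : Y.op^[k] z ∈ Y.CompSet a) :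
    z ∈ Y.CompSet a := by
  obtain ⟨k', m, hm⟩ := h
  exact ⟨k' + k, m, by rwa [Function.iterate_add_apply]⟩

noncomputable def CompAlg (Y : MonoUnary) (a : Y.carrier) : MonoUnary :=
  Y.restrict (Y.CompSet a) (compSet_closed Y a)

lemma compAlg_iterate (Y : MonoUnary) (a : Y.carrier) (k : ℕ) (z : (Y.CompAlg a).carrier) :
    ((Y.CompAlg a).op^[k] z).1 = Y.op^[k] z.1 :=
  restrict_iterate _ _ k z

/-- Periodic points of a component of a periodic point `a` induce periodicity of `a`. -/
lemma periodic_lift {n : ℕ} {a : Y.carrier} (ha : NCyc n Y a) (hn : 0 < n)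
    {z : Y.carrier} (hz : z ∈ Y.CompSet a) {p : ℕ} (hp : 0 < p) (hzp : Y.op^[p] z = z) :
    (Y.op^[p] a = a ∧ n ≤ p) ∧ Y.op^[n] z = z := by
  obtain ⟨k, m, hkm⟩ := hz
  have h1 : Y.op^[p * (k+1)] z = z := per_iterate hzp (k+1)
  have hk : k ≤ p * (k + 1) := le_trans (Nat.le_succ k) (Nat.le_mul_of_pos_left _ hp)
  obtain ⟨q, hq⟩ : ∃ q, p * (k+1) = q + k := ⟨p * (k+1) - k, by omega⟩
  rw [hq] at h1
  have h2 : z = Y.op^[q + m] a := by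
    conv_lhs => rw [← h1]
    rw [Function.iterate_add_apply, hkm, ← Function.iterate_add_apply]
  set s := q + m with hs
  have h3 : Y.op^[p + s] a = Y.op^[s] a := by
    rw [Function.iterate_add_apply, ← h2, hzp]
  have hns : s ≤ n * (s+1) := le_trans (Nat.le_succ s) (Nat.le_mul_of_pos_left _ hn)
  have hper : Y.op^[n * (s+1)] a = a := per_iterate ha.1 (s+1)
  have h5 : Y.op^[p] a = a := by
    have h6 := congrArg (Y.op^[n * (s+1) - s]) h3
    rw [← Function.iterate_add_apply, ← Function.iterate_add_apply] at h6
    have e1 : n * (s+1) - s + (p + s) = p + n * (s+1) := by omega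
    have e2 : n * (s+1) - s + s = n * (s+1) := by omega
    rw [e1, e2, hper, Function.iterate_add_apply, hper] at h6
    exact h6
  have h7 : Y.op^[n] z = z := by
    rw [h2, ← Function.iterate_add_apply, add_comm n s, Function.iterate_add_apply, ha.1]
  exact ⟨⟨h5, ha.2 p hp h5⟩, h7⟩

lemma good_compAlg {n : ℕ} {a : Y.carrier} (ha : NCyc n Y a) (hn : 0 < n) :
    Good n (Y.CompAlg a) := by
  constructor
  · -- connected
    rintro ⟨z, k, m, hkm⟩ ⟨w, k', m', hkm'⟩
    refine ⟨m' + k, m + k', ?_⟩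
    apply Subtype.ext
    erw [compAlg_iterate, compAlg_iterate]
    show Y.op^[m' + k] z = Y.op^[m + k'] w
    have e1 : Y.op^[m' + k] z = Y.op^[m' + m] a := by
      rw [Function.iterate_add_apply, hkm, ← Function.iterate_add_apply]
    have e2 : Y.op^[m + k'] w = Y.op^[m + m'] a := by
      rw [Function.iterate_add_apply, hkm', ← Function.iterate_add_apply]
    rw [e1, e2, add_comm m' m]
  · refine ⟨hn, ⟨⟨a, mem_compSet_self Y a⟩, ?_⟩, ?_⟩
    · apply Subtype.ext
      erw [compAlg_iterate]
      exact ha.1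
    · rintro m hm ⟨⟨z, hz⟩, hzm⟩
      have : Y.op^[m] z = z := by
        have := congrArg Subtype.val hzm
        erw [compAlg_iterate] at this; exact this
      exact (periodic_lift ha hn hz hm this).1.2

/-! ### embeddings and components -/

lemma Emb.mem_compSet {v : X.carrier → Y.carrier} (hv : Emb X Y v) {x u : X.carrier}
    (h : u ∈ X.CompSet x) : v u ∈ Y.CompSet (v x) := by
  obtain ⟨k, m, hkm⟩ := h
  exact ⟨k, m, by rw [← hv.iterate, ← hv.iterate, hkm]⟩

lemma Emb.mem_compSet_rev {v : X.carrier → Y.carrier} (hv : Emb X Y v) {x u : X.carrier}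
    (h : v u ∈ Y.CompSet (v x)) : u ∈ X.CompSet x := by
  obtain ⟨k, m, hkm⟩ := h
  rw [← hv.iterate, ← hv.iterate] at hkm
  exact ⟨k, m, hv.1 hkm⟩

lemma Emb.ncyc {v : X.carrier → Y.carrier} (hv : Emb X Y v) {n : ℕ} {x : X.carrier} :
    NCyc n X x ↔ NCyc n Y (v x) := by
  constructor
  · intro h
    refine ⟨by rw [← hv.iterate, h.1], fun m hm hmx => h.2 m hm ?_⟩
    apply hv.1
    rw [hv.iterate, hmx]
  · intro h
    refine ⟨hv.1 (by rw [hv.iterate, h.1]), fun m hm hmx => h.2 m hm ?_⟩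
    rw [← hv.iterate, hmx]

lemma Emb.compSet_eq_map {v : X.carrier → Y.carrier} (hv : Emb X Y v) {x u : X.carrier}
    (h : X.CompSet u = X.CompSet x) : Y.CompSet (v u) = Y.CompSet (v x) := by
  apply compSet_eq_of_mem
  exact hv.mem_compSet (h ▸ mem_compSet_self X u)

lemma Emb.compSet_eq_rev {v : X.carrier → Y.carrier} (hv : Emb X Y v) {x u : X.carrier}
    (h : Y.CompSet (v u) = Y.CompSet (v x)) : X.CompSet u = X.CompSet x := by
  apply compSet_eq_of_mem
  exact hv.mem_compSet_rev (h ▸ mem_compSet_self Y (v u))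

/-- E2, iso case: if `b` is not in the component of `v x`, the components are isomorphic. -/
lemma comp_step_iso {v : X.carrier → Y.carrier} {b : Y.carrier} (hv : Emb X Y v)
    (hgen : Y.closure (Set.range v ∪ {b}) = Set.univ) (x : X.carrier)
    (hb : b ∉ Y.CompSet (v x)) : Iso (X.CompAlg x) (Y.CompAlg (v x)) := by
  have hcl := closure_union_singleton hv.range_closed b
  refine iso_of_bij (v := fun u => ⟨v u.1, hv.mem_compSet u.2⟩) ⟨?_, ?_⟩ ?_
  · intro u1 u2 h12
    exact Subtype.ext (hv.1 (congrArg Subtype.val h12))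
  · intro u
    apply Subtype.ext
    show v (X.op u.1) = Y.op (v u.1)
    exact hv.2 u.1
  · rintro ⟨z, hz⟩
    have hz2 : z ∈ Set.range v ∪ {y | ∃ k, Y.op^[k] b = y} := by
      rw [← hcl, hgen]; trivial
    rcases hz2 with ⟨u, rfl⟩ | ⟨k, rfl⟩
    · exact ⟨⟨u, hv.mem_compSet_rev hz⟩, rfl⟩
    · exact absurd (mem_compSet_of_iterate hz) hb

/-- E2, step case: if `b` is in the component of `v x`, we get a large embedding. -/
lemma comp_step_lemb {v : X.carrier → Y.carrier} {b : Y.carrier} (hv : Emb X Y v)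
    (hgen : Y.closure (Set.range v ∪ {b}) = Set.univ) (x : X.carrier)
    (hb : b ∈ Y.CompSet (v x)) : LargeEmb (X.CompAlg x) (Y.CompAlg (v x)) := by
  have hcl := closure_union_singleton hv.range_closed b
  rw [largeEmb_iff]
  refine ⟨⟨⟨x, mem_compSet_self X x⟩⟩, fun u => ⟨v u.1, hv.mem_compSet u.2⟩, ⟨b, hb⟩,
    ⟨?_, ?_⟩, ?_⟩
  · intro u1 u2 h12
    exact Subtype.ext (hv.1 (congrArg Subtype.val h12))
  · intro u
    apply Subtype.ext
    show v (X.op u.1) = Y.op (v u.1)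
    exact hv.2 u.1
  · apply Set.eq_univ_of_forall
    rintro ⟨z, hz⟩
    have hz2 : z ∈ Set.range v ∪ {y | ∃ k, Y.op^[k] b = y} := by
      rw [← hcl, hgen]; trivial
    rcases hz2 with ⟨u, rfl⟩ | ⟨k, rfl⟩
    · exact mem_closure_self (Or.inl ⟨⟨u, hv.mem_compSet_rev hz⟩, rfl⟩)
    · refine ⟨⟨b, hb⟩, Or.inr rfl, k, ?_⟩
      apply Subtype.ext
      erw [compAlg_iterate]

/-- E3: a periodic point outside the range of `v` has component generated by `b`. -/
lemma comp_rho {v : X.carrier → Y.carrier} {b : Y.carrier} (hv : Emb X Y v)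
    (hgen : Y.closure (Set.range v ∪ {b}) = Set.univ) {n : ℕ} {a : Y.carrier}
    (ha : NCyc n Y a) (hn : 0 < n) (hna : a ∉ Set.range v) :
    b ∈ Y.CompSet a ∧ (∀ z ∈ Y.CompSet a, ∃ k, Y.op^[k] b = z) ∧
      ∀ z ∈ Y.CompSet a, z ∉ Set.range v := by
  have hcl := closure_union_singleton hv.range_closed b
  have hiter : ∀ m, Y.op^[m] a ∉ Set.range v := by
    intro m hm
    obtain ⟨j, hj⟩ := back_to_self ha.1 hn m
    exact hna (hj ▸ iterate_mem_of_closed hv.range_closed hm j)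
  have hnr : ∀ z ∈ Y.CompSet a, z ∉ Set.range v := by
    rintro z ⟨k, m, hkm⟩ hzr
    exact hiter m (hkm ▸ iterate_mem_of_closed hv.range_closed hzr k)
  have hmem : ∀ z ∈ Y.CompSet a, ∃ k, Y.op^[k] b = z := by
    intro z hz
    have hz2 : z ∈ Set.range v ∪ {y | ∃ k, Y.op^[k] b = y} := by
      rw [← hcl, hgen]; trivial
    rcases hz2 with h | h
    · exact absurd h (hnr z hz)
    · exact h
  obtain ⟨k, hk⟩ := hmem a (mem_compSet_self Y a)
  exact ⟨mem_compSet_of_iterate (a := a) (k := k) (hk ▸ mem_compSet_self Y a), hmem, hnr⟩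

/-! ### rho algebras -/

def IsRho (n : ℕ) (R : MonoUnary) : Prop :=
  Good n R ∧ ∃ z, R.closure {z} = Set.univ

lemma isRho_compAlg {v : X.carrier → Y.carrier} {b : Y.carrier} (hv : Emb X Y v)
    (hgen : Y.closure (Set.range v ∪ {b}) = Set.univ) {n : ℕ} {a : Y.carrier}
    (ha : NCyc n Y a) (hn : 0 < n) (hna : a ∉ Set.range v) : IsRho n (Y.CompAlg a) := by
  obtain ⟨hb, hmem, -⟩ := comp_rho hv hgen ha hn hna
  refine ⟨good_compAlg ha hn, ⟨b, hb⟩, Set.eq_univ_of_forall ?_⟩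
  rintro ⟨z, hz⟩
  obtain ⟨k, hk⟩ := hmem z hz
  refine ⟨⟨b, hb⟩, rfl, k, ?_⟩
  apply Subtype.ext
  erw [compAlg_iterate]
  exact hk

end MonoUnary
namespace MonoUnary

variable {X Y Z R R' : MonoUnary}

/-! ### tails -/

noncomputable def tailLen (n : ℕ) (Z : MonoUnary) (w : Z.carrier) : ℕ :=
  sInf {j | Z.op^[n] (Z.op^[j] w) = Z.op^[j] w}

lemma tail_exists {n : ℕ} (hg : Good n Z) (w : Z.carrier) :
    ∃ j, Z.op^[n] (Z.op^[j] w) = Z.op^[j] w := by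
  obtain ⟨a, ha⟩ := hg.exists_ncyc
  obtain ⟨k, m, hkm⟩ := hg.1 w a
  refine ⟨k, ?_⟩
  rw [hkm, ← Function.iterate_add_apply, add_comm n m, Function.iterate_add_apply, ha.1]

lemma tail_spec {n : ℕ} (hg : Good n Z) (w : Z.carrier) :
    Z.op^[n] (Z.op^[tailLen n Z w] w) = Z.op^[tailLen n Z w] w :=
  Nat.sInf_mem (tail_exists hg w)

lemma tail_le {n : ℕ} {w : Z.carrier} {j : ℕ} (h : Z.op^[n] (Z.op^[j] w) = Z.op^[j] w) :
    tailLen n Z w ≤ j :=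
  Nat.sInf_le h

lemma tail_prop_shift {n : ℕ} {w : Z.carrier} {j : ℕ}
    (h : Z.op^[n] (Z.op^[j] w) = Z.op^[j] w) (d : ℕ) :
    Z.op^[n] (Z.op^[j + d] w) = Z.op^[j + d] w := by
  induction d with
  | zero => exact h
  | succ d ih =>
    have h2 : j + (d + 1) = (j + d) + 1 := by omega
    rw [h2, Function.iterate_succ_apply']
    rw [← Function.iterate_succ_apply, Function.iterate_succ_apply']
    exact congrArg Z.op ih

lemma tail_prop_of_le {n : ℕ} (hg : Good n Z) (w : Z.carrier) {j : ℕ}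
    (hj : tailLen n Z w ≤ j) : Z.op^[n] (Z.op^[j] w) = Z.op^[j] w := by
  obtain ⟨d, rfl⟩ := Nat.exists_eq_add_of_le hj
  exact tail_prop_shift (tail_spec hg w) d

/-- The key rigidity property of trajectories in a `Good n` algebra. -/
lemma iterate_eq_iff {n : ℕ} (hg : Good n Z) (w : Z.carrier) (i j : ℕ) :
    Z.op^[i] w = Z.op^[j] w ↔
      (i = j ∨ (tailLen n Z w ≤ i ∧ tailLen n Z w ≤ j ∧ i % n = j % n)) := by
  have hn : 0 < n := hg.2.1
  obtain ⟨a, ha⟩ := hg.exists_ncyc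
  -- auxiliary: ← direction for i ≤ j
  have aux1 : ∀ i j : ℕ, i ≤ j → tailLen n Z w ≤ i → i % n = j % n →
      Z.op^[i] w = Z.op^[j] w := by
    intro i j hij hi hmod
    obtain ⟨t, ht⟩ : ∃ t, j = n * t + i := by
      refine ⟨(j - i) / n, ?_⟩
      have h1 : (j - i) % n = 0 := Nat.sub_mod_eq_zero_of_mod_eq hmod.symm
      have h2 := Nat.div_add_mod (j - i) n
      omega
    rw [ht, Function.iterate_add_apply]
    exact (per_iterate (tail_prop_of_le hg w hi) t).symm
  -- auxiliary: → direction for i < j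
  have aux2 : ∀ i j : ℕ, i < j → Z.op^[i] w = Z.op^[j] w →
      tailLen n Z w ≤ i ∧ i % n = j % n := by
    intro i j hij heq
    set p := j - i with hp
    have hp0 : 0 < p := by omega
    set z := Z.op^[i] w with hzdef
    have hzp : Z.op^[p] z = z := by
      rw [hzdef, ← Function.iterate_add_apply]
      have : p + i = j := by omega
      rw [this, ← heq]
    have hz : z ∈ Z.CompSet a := by
      obtain ⟨k, m, hkm⟩ := hg.1 z a
      exact ⟨k, m, hkm⟩
    obtain ⟨⟨hpa, hnp⟩, hnz⟩ := periodic_lift ha hn hz hp0 hzp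
    have hti : tailLen n Z w ≤ i := tail_le hnz
    constructor
    · exact hti
    · -- n ∣ p
      have hr : p % n = 0 := by
        by_contra hr0
        have hrpos : 0 < p % n := Nat.pos_of_ne_zero hr0
        have hdecomp := Nat.div_add_mod p n
        have hzr : Z.op^[p % n] z = z := by
          have h1 : Z.op^[n * (p / n)] z = z := per_iterate hnz (p / n)
          calc Z.op^[p % n] z = Z.op^[p % n] (Z.op^[n * (p / n)] z) := by rw [h1]
            _ = Z.op^[p % n + n * (p / n)] z := by rw [Function.iterate_add_apply]
            _ = Z.op^[p] z := by rw [Nat.mod_add_div p n]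
            _ = z := hzp
        have hge := (periodic_lift ha hn hz hrpos hzr).1.2
        have hlt := Nat.mod_lt p hn
        omega
      obtain ⟨t, ht⟩ : ∃ t, p = n * t := ⟨p / n, by have := Nat.div_add_mod p n; omega⟩
      have : j = i + n * t := by omega
      rw [this, Nat.add_mul_mod_self_left]
  constructor
  · intro heq
    rcases lt_trichotomy i j with h | h | h
    · obtain ⟨hti, hmod⟩ := aux2 i j h heq
      exact Or.inr ⟨hti, le_trans hti (le_of_lt h), hmod⟩
    · exact Or.inl h
    · obtain ⟨htj, hmod⟩ := aux2 j i h heq.symm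
      exact Or.inr ⟨le_trans htj (le_of_lt h), htj, hmod.symm⟩
  · rintro (rfl | ⟨hi, hj, hmod⟩)
    · rfl
    · rcases le_total i j with h | h
      · exact aux1 i j h hi hmod
      · exact (aux1 j i h hj hmod.symm).symm

lemma tail_shift {n : ℕ} (hg : Good n Z) (w : Z.carrier) (d : ℕ) (hd : d ≤ tailLen n Z w) :
    tailLen n Z (Z.op^[d] w) = tailLen n Z w - d := by
  have hmem : ∀ j, Z.op^[j] (Z.op^[d] w) = Z.op^[j + d] w := fun j =>
    (Function.iterate_add_apply _ j d w).symm
  have hup : Z.op^[n] (Z.op^[tailLen n Z w - d] (Z.op^[d] w)) =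
      Z.op^[tailLen n Z w - d] (Z.op^[d] w) := by
    rw [hmem, Nat.sub_add_cancel hd]
    exact tail_spec hg w
  apply le_antisymm
  · exact Nat.sInf_le hup
  · have hne : {j | Z.op^[n] (Z.op^[j] (Z.op^[d] w)) = Z.op^[j] (Z.op^[d] w)}.Nonempty :=
      ⟨_, hup⟩
    have hspec : Z.op^[n] (Z.op^[tailLen n Z (Z.op^[d] w)] (Z.op^[d] w)) =
        Z.op^[tailLen n Z (Z.op^[d] w)] (Z.op^[d] w) := Nat.sInf_mem hne
    have hP : Z.op^[n] (Z.op^[tailLen n Z (Z.op^[d] w) + d] w) =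
        Z.op^[tailLen n Z (Z.op^[d] w) + d] w := by
      rw [← hmem]; exact hspec
    have := tail_le hP
    omega

/-! ### rho algebras are pairwise one step apart -/

lemma rho_lemb {n : ℕ} (hR : Good n R) (hR' : Good n R') (z₀ : R.carrier) (z₀' : R'.carrier)
    (hz : R.closure {z₀} = Set.univ) (hz' : R'.closure {z₀'} = Set.univ)
    (hle : tailLen n R' z₀' ≤ tailLen n R z₀) : LargeEmb R' R := by
  set ℓ := tailLen n R z₀ with hℓ
  set ℓ' := tailLen n R' z₀' with hℓ'
  set w := R.op^[ℓ - ℓ'] z₀ with hw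
  have htw : tailLen n R w = ℓ' := by
    rw [hw, tail_shift hR z₀ _ (by omega)]
    omega
  have gen' : ∀ y : R'.carrier, ∃ j, R'.op^[j] z₀' = y := by
    intro y
    have hy : y ∈ R'.closure {z₀'} := by rw [hz']; trivial
    obtain ⟨x, hx, j, hj⟩ := hy
    rcases hx with rfl
    exact ⟨j, hj⟩
  have hidx : ∀ y : R'.carrier, R'.op^[(gen' y).choose] z₀' = y := fun y => (gen' y).choose_spec
  set v : R'.carrier → R.carrier := fun y => R.op^[(gen' y).choose] w with hv
  have trans : ∀ i j : ℕ, R'.op^[i] z₀' = R'.op^[j] z₀' ↔ R.op^[i] w = R.op^[j] w := by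
    intro i j
    rw [iterate_eq_iff hR' z₀', iterate_eq_iff hR w, htw]
  rw [largeEmb_iff]
  refine ⟨hR'.nonempty, v, z₀, ⟨?_, ?_⟩, ?_⟩
  · intro y y' hyy
    have h1 : R.op^[(gen' y).choose] w = R.op^[(gen' y').choose] w := hyy
    rw [← trans] at h1
    rw [hidx, hidx] at h1
    exact h1
  · intro y
    show R.op^[(gen' (R'.op y)).choose] w = R.op (R.op^[(gen' y).choose] w)
    rw [← Function.iterate_succ_apply' R.op]
    rw [← trans]
    rw [hidx, Function.iterate_succ_apply', hidx]
  · apply Set.eq_univ_of_forall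
    intro y
    have : y ∈ R.closure {z₀} := by rw [hz]; trivial
    obtain ⟨x, hx, j, hj⟩ := this
    obtain rfl : x = z₀ := hx
    exact ⟨x, Or.inr rfl, j, hj⟩

lemma rho_step {n : ℕ} (h1 : IsRho n R) (h2 : IsRho n R') : Step R R' := by
  obtain ⟨hR, z₀, hz⟩ := h1
  obtain ⟨hR', z₀', hz'⟩ := h2
  rcases le_total (tailLen n R' z₀') (tailLen n R z₀) with h | h
  · exact Or.inr (rho_lemb hR hR' z₀ z₀' hz hz' h)
  · exact Or.inl (rho_lemb hR' hR z₀' z₀ hz' hz h)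

end MonoUnary
namespace MonoUnary

variable {X Y X0 Xa Xb A B : MonoUnary}

lemma iso_compAlg_of_connected (hc : Connected X) (a : X.carrier) : Iso X (X.CompAlg a) := by
  refine iso_of_bij (v := fun x => ⟨x, ?_⟩) ⟨?_, ?_⟩ ?_
  · obtain ⟨k, m, hkm⟩ := hc x a
    exact ⟨k, m, hkm⟩
  · intro x y hxy
    exact congrArg Subtype.val hxy
  · intro x
    apply Subtype.ext
    rfl
  · rintro ⟨z, hz⟩
    exact ⟨z, rfl⟩

/-- The tracking invariant along a path. -/
def TrackInv (n : ℕ) (X0 Xj : MonoUnary) (j : ℕ) : Prop :=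
  (∃ α, α ≤ j ∧ ∃ a : Xj.carrier, NCyc n Xj a ∧ CPath n X0 (Xj.CompAlg a) α ∧
     ∀ a' : Xj.carrier, NCyc n Xj a' →
       (Xj.CompSet a' = Xj.CompSet a ∨
        ∃ β, α + β + 1 ≤ j ∧ ∃ R, IsRho n R ∧ CPath n R (Xj.CompAlg a') β))
  ∨
  (∃ α, α + 1 ≤ j ∧ (∃ R₀, IsRho n R₀ ∧ CPath n X0 R₀ α) ∧
     ∀ a' : Xj.carrier, NCyc n Xj a' →
       ∃ β, α + β + 1 ≤ j ∧ ∃ R, IsRho n R ∧ CPath n R (Xj.CompAlg a') β)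

lemma trackinv_base {n : ℕ} (hG : Good n X0) : TrackInv n X0 X0 0 := by
  obtain ⟨a, ha⟩ := hG.exists_ncyc
  refine Or.inl ⟨0, le_refl 0, a, ha, cpath_of_iso hG (iso_compAlg_of_connected hG.1 a), ?_⟩
  intro a' _
  exact Or.inl (compSet_eq_of_mem (by obtain ⟨k, m, h⟩ := hG.1 a' a; exact ⟨k, m, h⟩))

lemma trackinv_step {n : ℕ} (hn : 0 < n) {j : ℕ}
    (hstep : Step Xa Xb) (hinv : TrackInv n X0 Xa j) : TrackInv n X0 Xb (j + 1) := by
  rcases hstep with hF | hB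
  · -- forward : Xa embeds into Xb
    rw [largeEmb_iff] at hF
    obtain ⟨hne, v, b, hv, hgen⟩ := hF
    rcases hinv with ⟨α, hα, a, hna, hpath, hjunk⟩ | ⟨α, hα1, ⟨R₀, hR₀, hR₀p⟩, hjunk⟩
    · -- LEFT
      have hnva : NCyc n Xb (v a) := hv.ncyc.mp hna
      by_cases hbcomp : b ∈ Xb.CompSet (v a)
      · -- tracked component grows
        refine Or.inl ⟨α + 1, by omega, v a, hnva,
          hpath.append_step (Or.inl (comp_step_lemb hv hgen a hbcomp))
            (good_compAlg hnva hn), ?_⟩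
        intro a' hna'
        by_cases hsame : Xb.CompSet a' = Xb.CompSet (v a)
        · exact Or.inl hsame
        by_cases hrange : a' ∈ Set.range v
        · obtain ⟨a₀, rfl⟩ := hrange
          have hna₀ : NCyc n Xa a₀ := hv.ncyc.mpr hna'
          rcases hjunk a₀ hna₀ with holdL | ⟨β, hβ, R, hR, hRp⟩
          · exact absurd (hv.compSet_eq_map holdL) hsame
          · by_cases hb' : b ∈ Xb.CompSet (v a₀)
            · exact absurd (compSet_eq_of_not_disjoint hb' hbcomp) hsame
            · exact Or.inr ⟨β, by omega, R, hR,
                hRp.congr_right (comp_step_iso hv hgen a₀ hb').symm⟩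
        · obtain ⟨hb', -, -⟩ := comp_rho hv hgen hna' hn hrange
          exact absurd (compSet_eq_of_not_disjoint hb' hbcomp) hsame
      · -- tracked component unchanged
        refine Or.inl ⟨α, by omega, v a, hnva,
          hpath.congr_right (comp_step_iso hv hgen a hbcomp).symm, ?_⟩
        intro a' hna'
        by_cases hsame : Xb.CompSet a' = Xb.CompSet (v a)
        · exact Or.inl hsame
        by_cases hrange : a' ∈ Set.range v
        · obtain ⟨a₀, rfl⟩ := hrange
          have hna₀ : NCyc n Xa a₀ := hv.ncyc.mpr hna'
          rcases hjunk a₀ hna₀ with holdL | ⟨β, hβ, R, hR, hRp⟩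
          · exact absurd (hv.compSet_eq_map holdL) hsame
          · by_cases hb' : b ∈ Xb.CompSet (v a₀)
            · exact Or.inr ⟨β + 1, by omega, R, hR,
                hRp.append_step (Or.inl (comp_step_lemb hv hgen a₀ hb'))
                  (good_compAlg hna' hn)⟩
            · exact Or.inr ⟨β, by omega, R, hR,
                hRp.congr_right (comp_step_iso hv hgen a₀ hb').symm⟩
        · refine Or.inr ⟨0, by omega, Xb.CompAlg a', isRho_compAlg hv hgen hna' hn hrange,
            cpath_of_iso (good_compAlg hna' hn) (Iso.refl _)⟩
    · -- RIGHT (dead)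
      refine Or.inr ⟨α, by omega, ⟨R₀, hR₀, hR₀p⟩, ?_⟩
      intro a' hna'
      by_cases hrange : a' ∈ Set.range v
      · obtain ⟨a₀, rfl⟩ := hrange
        have hna₀ : NCyc n Xa a₀ := hv.ncyc.mpr hna'
        obtain ⟨β, hβ, R, hR, hRp⟩ := hjunk a₀ hna₀
        by_cases hb' : b ∈ Xb.CompSet (v a₀)
        · exact ⟨β + 1, by omega, R, hR,
            hRp.append_step (Or.inl (comp_step_lemb hv hgen a₀ hb'))
              (good_compAlg hna' hn)⟩
        · exact ⟨β, by omega, R, hR,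
            hRp.congr_right (comp_step_iso hv hgen a₀ hb').symm⟩
      · exact ⟨0, by omega, Xb.CompAlg a', isRho_compAlg hv hgen hna' hn hrange,
          cpath_of_iso (good_compAlg hna' hn) (Iso.refl _)⟩
  · -- backward : Xb embeds into Xa
    rw [largeEmb_iff] at hB
    obtain ⟨hne, v, b, hv, hgen⟩ := hB
    rcases hinv with ⟨α, hα, a, hna, hpath, hjunk⟩ | ⟨α, hα1, ⟨R₀, hR₀, hR₀p⟩, hjunk⟩
    · -- LEFT
      by_cases hamem : a ∈ Set.range v
      · -- tracked cycle survives
        obtain ⟨a₀, rfl⟩ := hamem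
        have hna₀ : NCyc n Xb a₀ := hv.ncyc.mpr hna
        have hmain : ∃ α', α' ≤ j + 1 ∧ α' ≤ α + 1 ∧ (b ∈ Xa.CompSet (v a₀) → α' = α + 1) ∧
            (¬ b ∈ Xa.CompSet (v a₀) → α' = α) ∧ CPath n X0 (Xb.CompAlg a₀) α' := by
          by_cases hbcomp : b ∈ Xa.CompSet (v a₀)
          · exact ⟨α + 1, by omega, le_refl _, fun _ => rfl, fun h => absurd hbcomp h,
              hpath.append_step (Or.inr (comp_step_lemb hv hgen a₀ hbcomp))
                (good_compAlg hna₀ hn)⟩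
          · exact ⟨α, by omega, by omega, fun h => absurd h hbcomp, fun _ => rfl,
              hpath.congr_right (comp_step_iso hv hgen a₀ hbcomp)⟩
        obtain ⟨α', hα'1, hα'2, hα'pos, hα'neg, hpath'⟩ := hmain
        refine Or.inl ⟨α', hα'1, a₀, hna₀, hpath', ?_⟩
        intro a' hna'
        by_cases hsame : Xb.CompSet a' = Xb.CompSet a₀
        · exact Or.inl hsame
        have hnva' : NCyc n Xa (v a') := hv.ncyc.mp hna'
        rcases hjunk (v a') hnva' with holdL | ⟨β, hβ, R, hR, hRp⟩
        · exact absurd (hv.compSet_eq_rev holdL) hsame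
        · by_cases hb' : b ∈ Xa.CompSet (v a')
          · have hneq : ¬ b ∈ Xa.CompSet (v a₀) := by
              intro hcon
              exact hsame (hv.compSet_eq_rev (compSet_eq_of_not_disjoint hb' hcon))
            have hα'eq := hα'neg hneq
            exact Or.inr ⟨β + 1, by omega, R, hR,
              hRp.append_step (Or.inr (comp_step_lemb hv hgen a' hb'))
                (good_compAlg hna' hn)⟩
          · exact Or.inr ⟨β, by omega, R, hR,
              hRp.congr_right (comp_step_iso hv hgen a' hb')⟩
      · -- DEATH of tracked component
        obtain ⟨hbc, hgenc, hnrange⟩ := comp_rho hv hgen hna hn hamem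
        refine Or.inr ⟨α, by omega, ⟨Xa.CompAlg a, isRho_compAlg hv hgen hna hn hamem, hpath⟩, ?_⟩
        intro a' hna'
        have hnva' : NCyc n Xa (v a') := hv.ncyc.mp hna'
        rcases hjunk (v a') hnva' with holdL | ⟨β, hβ, R, hR, hRp⟩
        · exact absurd ⟨a', rfl⟩ (hnrange (v a') (holdL ▸ mem_compSet_self Xa (v a')))
        · by_cases hb' : b ∈ Xa.CompSet (v a')
          · have : Xa.CompSet (v a') = Xa.CompSet a := compSet_eq_of_not_disjoint hb' hbc
            exact absurd ⟨a', rfl⟩ (hnrange (v a') (this ▸ mem_compSet_self Xa (v a')))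
          · exact ⟨β, by omega, R, hR,
              hRp.congr_right (comp_step_iso hv hgen a' hb')⟩
    · -- RIGHT (dead)
      refine Or.inr ⟨α, by omega, ⟨R₀, hR₀, hR₀p⟩, ?_⟩
      intro a' hna'
      have hnva' : NCyc n Xa (v a') := hv.ncyc.mp hna'
      obtain ⟨β, hβ, R, hR, hRp⟩ := hjunk (v a') hnva'
      by_cases hb' : b ∈ Xa.CompSet (v a')
      · exact ⟨β + 1, by omega, R, hR,
          hRp.append_step (Or.inr (comp_step_lemb hv hgen a' hb'))
            (good_compAlg hna' hn)⟩
      · exact ⟨β, by omega, R, hR, hRp.congr_right (comp_step_iso hv hgen a' hb')⟩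

/-- Normalization: a path between Good algebras can be replaced by a path of Good algebras. -/
lemma normalize_path {n m : ℕ} (hA : Good n A) (hB : Good n B) (hp : HasPath A B m) :
    ∃ k ≤ m, CPath n A B k := by
  obtain ⟨C, hC0, hCm, hs⟩ := hp
  have hn : 0 < n := hA.2.1
  have hG0 : Good n (C 0) := hA.congr hC0.symm
  have hGm : Good n (C m) := hB.congr hCm.symm
  have hinv : ∀ j, j ≤ m → TrackInv n (C 0) (C j) j := by
    intro j
    induction j with
    | zero => intro _; exact trackinv_base hG0
    | succ j ih =>
      intro hj
      exact trackinv_step hn (hs j (by omega)) (ih (by omega))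
  rcases hinv m (le_refl m) with ⟨α, hα, a, hna, hpath, hjunk⟩ | ⟨α, hα1, ⟨R₀, hR₀, hR₀p⟩, hjunk⟩
  · refine ⟨α, hα, ?_⟩
    have h1 : CPath n (C 0) B α :=
      hpath.congr_right (hCm.symm.trans (iso_compAlg_of_connected (hB.1.congr hCm.symm) a))
    exact h1.congr_left hC0.symm
  · obtain ⟨a, hna⟩ := hGm.exists_ncyc
    obtain ⟨β, hβ, R, hR, hRp⟩ := hjunk a hna
    refine ⟨α + 1 + β, by omega, ?_⟩
    have h1 : CPath n (C 0) R (α + 1) := hR₀p.append_step (rho_step hR₀ hR) hR.1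
    have h2 : CPath n R B β :=
      hRp.congr_right (hCm.symm.trans (iso_compAlg_of_connected (hB.1.congr hCm.symm) a))
    exact ((h1.concat h2).congr_left hC0.symm)

end MonoUnary
namespace MonoUnary
open Fin.NatCast

variable {X Z : MonoUnary} {n : ℕ}

lemma iterate_fixed {z : Z.carrier} (h : Z.op z = z) (k : ℕ) : Z.op^[k] z = z := by
  induction k with
  | zero => rfl
  | succ k ih => rw [Function.iterate_succ_apply', ih, h]

lemma fix_unique (hc : Connected Z) {z z' : Z.carrier} (h : Z.op z = z) (h' : Z.op z' = z') :
    z = z' := by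
  obtain ⟨k, m, hkm⟩ := hc z z'
  rwa [iterate_fixed h, iterate_fixed h'] at hkm

section Trees

variable [NeZero n] (r : Fin n → X.carrier)

lemma cycle_iterate (hr : ∀ i, X.op (r i) = r (i + 1)) (i : Fin n) (m : ℕ) :
    X.op^[m] (r i) = r (i + (m : Fin n)) := by
  induction m with
  | zero => simp
  | succ m ih =>
    rw [Function.iterate_succ_apply', ih, hr]
    congr 1
    push_cast
    abel

lemma reach_cycle (hc : Connected X) (hr : ∀ i, X.op (r i) = r (i + 1)) (x : X.carrier) :
    ∃ k, X.op^[k] x ∈ Set.range r := by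
  obtain ⟨k, m, hkm⟩ := hc x (r 0)
  exact ⟨k, hkm ▸ ⟨0 + (m : Fin n), (cycle_iterate r hr 0 m).symm ▸ rfl⟩⟩

lemma periodic_mem_range (hr : ∀ i, X.op (r i) = r (i + 1)) (hc : Connected X)
    {z : X.carrier} {p : ℕ} (hp : 0 < p) (hz : X.op^[p] z = z) : z ∈ Set.range r := by
  obtain ⟨k, hk⟩ := reach_cycle r hc hr z
  obtain ⟨i, hi⟩ := hk
  obtain ⟨j, hj⟩ := back_to_self hz hp k
  rw [← hi] at hj
  rw [← hj, cycle_iterate r hr]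
  exact ⟨_, rfl⟩

lemma ncyc_r (hrinj : Function.Injective r) (hr : ∀ i, X.op (r i) = r (i + 1))
    (hcore : HasCoreC X n) (i : Fin n) : NCyc n X (r i) := by
  constructor
  · rw [cycle_iterate r hr]
    congr 1
    simp [Fin.natCast_self]
  · intro m hm hmr
    exact hcore.2.2 m hm ⟨r i, hmr⟩

lemma root_mem (i : Fin n) : r i ∈ X.treeSet r i :=
  ⟨0, rfl, fun j hj => absurd hj (Nat.not_lt_zero j)⟩

lemma treeSet_disjoint {x : X.carrier} {i j : Fin n} (hi : x ∈ X.treeSet r i)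
    (hj : x ∈ X.treeSet r j) (hrinj : Function.Injective r) : i = j := by
  obtain ⟨k, hk, hklt⟩ := hi
  obtain ⟨k', hk', hklt'⟩ := hj
  have hkk : k = k' := by
    by_contra hne
    rcases Nat.lt_or_ge k k' with h | h
    · exact hklt' k h ⟨i, hk.symm⟩
    · exact hklt k' (by omega) ⟨j, hk'.symm⟩
  rw [hkk, hk'] at hk
  exact (hrinj hk).symm

lemma treeSet_cover (hc : Connected X) (hr : ∀ i, X.op (r i) = r (i + 1)) (x : X.carrier) :
    ∃ i, x ∈ X.treeSet r i := by
  have hne : {k | X.op^[k] x ∈ Set.range r}.Nonempty := reach_cycle r hc hr x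
  obtain ⟨i, hi⟩ := Nat.sInf_mem hne
  refine ⟨i, sInf {k | X.op^[k] x ∈ Set.range r}, hi.symm, fun j hj hjr => ?_⟩
  exact absurd hjr (Nat.notMem_of_lt_sInf hj)

def treeRoot (i : Fin n) : (X.treeComp r i).carrier := ⟨r i, root_mem r i⟩

lemma treeComp_op_root {i : Fin n} (x : (X.treeComp r i).carrier) (hx : x.1 = r i) :
    (X.treeComp r i).op x = x := dif_pos hx

lemma treeComp_op_ne {i : Fin n} (x : (X.treeComp r i).carrier) (hx : x.1 ≠ r i) :
    ((X.treeComp r i).op x).1 = X.op x.1 :=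
  congrArg Subtype.val (dif_neg hx)

lemma treeRoot_fixed (i : Fin n) : (X.treeComp r i).op (treeRoot r i) = treeRoot r i :=
  treeComp_op_root r _ rfl

lemma tree_reach_root {i : Fin n} (x : (X.treeComp r i).carrier) :
    ∃ k, (X.treeComp r i).op^[k] x = treeRoot r i := by
  suffices h : ∀ k (x : X.carrier) (hk : X.op^[k] x = r i)
      (hklt : ∀ j < k, X.op^[j] x ∉ Set.range r),
      ∃ k', (X.treeComp r i).op^[k'] ⟨x, k, hk, hklt⟩ = treeRoot r i by
    obtain ⟨x, hmem⟩ := x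
    obtain ⟨k, hk, hklt⟩ := hmem
    exact h k x hk hklt
  intro k
  induction k with
  | zero => exact fun x hk hklt => ⟨0, Subtype.ext hk⟩
  | succ k ih =>
    intro x hk hklt
    have hx : x ≠ r i := by
      intro h
      exact hklt 0 (by omega) ⟨i, h.symm⟩
    have hk2 : X.op^[k] (X.op x) = r i := by
      rwa [← Function.iterate_succ_apply]
    have hklt2 : ∀ j < k, X.op^[j] (X.op x) ∉ Set.range r := by
      intro j hj
      rw [← Function.iterate_succ_apply]
      exact hklt (j+1) (by omega)
    obtain ⟨k', hk'⟩ := ih (X.op x) hk2 hklt2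
    refine ⟨k' + 1, ?_⟩
    have hop : (X.treeComp r i).op ⟨x, k + 1, hk, hklt⟩ =
        (⟨X.op x, k, hk2, hklt2⟩ : (X.treeComp r i).carrier) :=
      Subtype.ext (treeComp_op_ne r _ hx)
    refine (congrArg ((X.treeComp r i).op^[k']) hop).trans ?_
    exact hk'

lemma good_tree (i : Fin n) : Good 1 (X.treeComp r i) := by
  refine ⟨?_, ?_, ⟨treeRoot r i, treeRoot_fixed r i⟩, fun m hm _ => hm⟩
  · intro x y
    obtain ⟨k, hk⟩ := tree_reach_root r x
    obtain ⟨k', hk'⟩ := tree_reach_root r y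
    exact ⟨k, k', by rw [hk, hk']⟩
  · omega

end Trees

end MonoUnary
namespace MonoUnary

variable {n : ℕ}

noncomputable def glue (n : ℕ) [NeZero n] (U : Fin n → MonoUnary)
    (p : ∀ i, (U i).carrier) : MonoUnary where
  carrier := Σ i : Fin n, (U i).carrier
  op := fun z =>
    letI : DecidableEq ((U z.1).carrier) := Classical.decEq _
    if z.2 = p z.1 then ⟨z.1 + 1, p (z.1 + 1)⟩ else ⟨z.1, (U z.1).op z.2⟩

variable [NeZero n] {U V : Fin n → MonoUnary} {p : ∀ i, (U i).carrier}

lemma glue_op_pt {i : Fin n} : (glue n U p).op ⟨i, p i⟩ = ⟨i + 1, p (i + 1)⟩ := if_pos rfl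

lemma glue_op_ne {i : Fin n} {x : (U i).carrier} (hx : x ≠ p i) :
    (glue n U p).op ⟨i, x⟩ = ⟨i, (U i).op x⟩ := if_neg hx

lemma glue_iterate_of_ne {i : Fin n} {s : (U i).carrier} {m : ℕ}
    (h : ∀ t < m, (U i).op^[t] s ≠ p i) :
    (glue n U p).op^[m] ⟨i, s⟩ = ⟨i, (U i).op^[m] s⟩ := by
  induction m with
  | zero => rfl
  | succ m ih =>
    erw [Function.iterate_succ_apply', ih (fun t ht => h t (by omega)),
      Function.iterate_succ_apply']
    exact glue_op_ne (h m (by omega))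

/-- The decomposition isomorphism: a Good algebra is the glue of its tree algebras. -/
lemma glue_iso {X : MonoUnary} (r : Fin n → X.carrier) (hc : Connected X)
    (hr : ∀ i, X.op (r i) = r (i + 1)) (hrinj : Function.Injective r)
    (σ : Fin n → Fin n) (hσbij : Function.Bijective σ) (hσ : ∀ i, σ i + 1 = σ (i + 1))
    (pts : ∀ i, (X.treeComp r (σ i)).carrier) (hpts : ∀ i, pts i = treeRoot r (σ i)) :
    Iso X (glue n (fun i => X.treeComp r (σ i)) pts) := by
  apply Iso.symm
  refine iso_of_bij (v := fun z => z.2.1) ⟨?_, ?_⟩ ?_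
  · rintro ⟨i, x⟩ ⟨j, y⟩ (h : x.1 = y.1)
    have hij : σ i = σ j := treeSet_disjoint r x.2 (h ▸ y.2) hrinj
    obtain rfl : i = j := hσbij.1 hij
    exact congrArg (Sigma.mk i) (Subtype.ext h)
  · rintro ⟨i, x⟩
    by_cases hx : x = pts i
    · subst hx
      rw [glue_op_pt]
      show (pts (i+1)).1 = X.op (pts i).1
      rw [hpts, hpts]
      show r (σ (i+1)) = X.op (r (σ i))
      rw [hr, hσ]
    · have hx1 : x.1 ≠ r (σ i) := by
        intro h
        exact hx (by rw [hpts]; exact Subtype.ext h)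
      rw [glue_op_ne hx]
      exact treeComp_op_ne r x hx1
  · intro x
    obtain ⟨i', hi'⟩ := treeSet_cover r hc hr x
    obtain ⟨i, rfl⟩ := hσbij.2 i'
    exact ⟨⟨i, ⟨x, hi'⟩⟩, rfl⟩

section GlueMaps

/-- congruence of glue under pointed isomorphism of the families -/
lemma glue_iso_cong (pU : ∀ i, (U i).carrier) (pV : ∀ i, (V i).carrier)
    (he : ∀ i, ∃ e : (U i).carrier ≃ (V i).carrier,
      (∀ x, e ((U i).op x) = (V i).op (e x)) ∧ e (pU i) = pV i) :
    Iso (glue n U pU) (glue n V pV) := by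
  choose e hehom hept using he
  refine iso_of_bij (v := fun z => ⟨z.1, e z.1 z.2⟩) ⟨?_, ?_⟩ ?_
  · rintro ⟨i, x⟩ ⟨j, y⟩ h
    obtain ⟨rfl, h2⟩ := Sigma.mk.inj_iff.mp h
    exact congrArg (Sigma.mk i) ((e i).injective (eq_of_heq h2))
  · rintro ⟨i, x⟩
    by_cases hx : x = pU i
    · subst hx
      rw [glue_op_pt]
      show (⟨i + 1, e (i+1) (pU (i+1))⟩ : Σ i, (V i).carrier) = _
      rw [hept]
      show _ = (glue n V pV).op ⟨i, e i (pU i)⟩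
      rw [hept, glue_op_pt]
    · have h2 : e i x ≠ pV i := by
        intro h
        rw [← hept i] at h
        exact hx ((e i).injective h)
      rw [glue_op_ne hx, glue_op_ne h2]
      exact congrArg (Sigma.mk i) (hehom i x)
  · rintro ⟨i, y⟩
    exact ⟨⟨i, (e i).symm y⟩, congrArg (Sigma.mk i) (by simp)⟩

/-- lifting a large embedding in one coordinate to the glued algebras -/
lemma glue_lemb (pU : ∀ i, (U i).carrier) (pV : ∀ i, (V i).carrier) (i₀ : Fin n)
    (hqU : ∀ i, (U i).op (pU i) = pU i) (hqV : ∀ i, (V i).op (pV i) = pV i)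
    (he : ∀ i, i ≠ i₀ → ∃ e : (U i).carrier ≃ (V i).carrier,
      (∀ x, e ((U i).op x) = (V i).op (e x)) ∧ e (pU i) = pV i)
    (v : (U i₀).carrier → (V i₀).carrier) (b : (V i₀).carrier)
    (hv : Emb (U i₀) (V i₀) v) (hgen : (V i₀).closure (Set.range v ∪ {b}) = Set.univ)
    (hvp : v (pU i₀) = pV i₀) :
    LargeEmb (glue n U pU) (glue n V pV) := by
  classical
  choose e hehom hept using he
  set vG : (glue n U pU).carrier → (glue n V pV).carrier :=
    fun z => if h : z.1 = i₀ then ⟨i₀, v (h ▸ z.2)⟩ else ⟨z.1, e z.1 h z.2⟩ with hvG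
  have vG_eq : ∀ (x : (U i₀).carrier), vG ⟨i₀, x⟩ = ⟨i₀, v x⟩ := fun x => dif_pos rfl
  have vG_ne : ∀ (i : Fin n) (h : i ≠ i₀) (x : (U i).carrier), vG ⟨i, x⟩ = ⟨i, e i h x⟩ :=
    fun i h x => dif_neg h
  have vG_pt : ∀ j, vG ⟨j, pU j⟩ = ⟨j, pV j⟩ := by
    intro j
    by_cases h : j = i₀
    · subst h
      rw [vG_eq, hvp]
    · rw [vG_ne j h, hept j h]
  have vG_inj : Function.Injective vG := by
    rintro ⟨i, x⟩ ⟨j, y⟩ h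
    by_cases hi : i = i₀ <;> by_cases hj : j = i₀
    · subst hi
      obtain rfl : j = i := hj
      rw [vG_eq, vG_eq] at h
      obtain ⟨-, h2⟩ := Sigma.mk.inj_iff.mp h
      exact congrArg (Sigma.mk _) (hv.1 (eq_of_heq h2))
    · subst hi
      rw [vG_eq, vG_ne j hj] at h
      exact absurd (Sigma.mk.inj_iff.mp h).1.symm hj
    · subst hj
      rw [vG_ne i hi, vG_eq] at h
      exact absurd (Sigma.mk.inj_iff.mp h).1 hi
    · rw [vG_ne i hi, vG_ne j hj] at h
      obtain ⟨rfl, h2⟩ := Sigma.mk.inj_iff.mp h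
      exact congrArg (Sigma.mk i) ((e i hi).injective (eq_of_heq h2))
  have vG_comm : ∀ z, vG ((glue n U pU).op z) = (glue n V pV).op (vG z) := by
    rintro ⟨i, x⟩
    by_cases hx : x = pU i
    · subst hx
      rw [glue_op_pt, vG_pt, vG_pt, glue_op_pt]
    · by_cases hi : i = i₀
      · subst hi
        have hvx : v x ≠ pV i := by
          intro h
          rw [← hvp] at h
          exact hx (hv.1 h)
        rw [glue_op_ne hx, vG_eq, vG_eq, glue_op_ne hvx]
        exact congrArg (Sigma.mk i) (hv.2 x)
      · have hex : e i hi x ≠ pV i := by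
          intro h
          rw [← hept i hi] at h
          exact hx ((e i hi).injective h)
        rw [glue_op_ne hx, vG_ne i hi, vG_ne i hi, glue_op_ne hex]
        exact congrArg (Sigma.mk i) (hehom i hi x)
  rw [largeEmb_iff]
  refine ⟨⟨⟨i₀, pU i₀⟩⟩, vG, ⟨i₀, b⟩, ⟨vG_inj, vG_comm⟩, ?_⟩
  apply Set.eq_univ_of_forall
  rintro ⟨i, y⟩
  by_cases hi : i = i₀
  · subst hi
    have hy : y ∈ (V i).closure (Set.range v ∪ {b}) := by rw [hgen]; trivial
    obtain ⟨s, hs, m, hm⟩ := hy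
    by_cases hyp : y = pV i
    · subst hyp
      refine mem_closure_self (Or.inl ⟨⟨i, pU i⟩, ?_⟩)
      rw [vG_pt]
    · have hnever : ∀ t < m, (V i).op^[t] s ≠ pV i := by
        intro t ht hcon
        apply hyp
        rw [← hm, show m = (m - t) + t by omega, Function.iterate_add_apply, hcon,
          iterate_fixed (hqV i)]
      have hiter := glue_iterate_of_ne (p := pV) hnever
      have hsmem : (⟨i, s⟩ : (glue n V pV).carrier) ∈ Set.range vG ∪ {⟨i, b⟩} := by
        rcases hs with ⟨u, rfl⟩ | hs
        · exact Or.inl ⟨⟨i, u⟩, vG_eq u⟩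
        · rcases hs with rfl
          exact Or.inr rfl
      exact ⟨⟨i, s⟩, hsmem, m, by rw [hiter, hm]⟩
  · refine mem_closure_self (Or.inl ⟨⟨i, (e i hi).symm y⟩, ?_⟩)
    rw [vG_ne i hi]
    exact congrArg (Sigma.mk i) (by simp)

end GlueMaps

end MonoUnary
namespace MonoUnary

variable {n : ℕ} {X X' Y Z : MonoUnary}

lemma iso_of_eq (h : X = Y) : Iso X Y := by subst h; exact Iso.refl X

lemma good_one_fix (hg : Good 1 Z) : ∃ z, Z.op z = z := by
  obtain ⟨a, ha⟩ := hg.2.2.1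
  exact ⟨a, by rwa [Function.iterate_one] at ha⟩

noncomputable def fixPt (Z : MonoUnary) (h : ∃ z, Z.op z = z) : Z.carrier := h.choose

lemma fixPt_fixed {h : ∃ z, Z.op z = z} : Z.op (fixPt Z h) = fixPt Z h := h.choose_spec

lemma iso_pointed (hZ' : Connected Z) (h : Iso Y Z) (hf : ∃ z, Y.op z = z)
    (hf' : ∃ z, Z.op z = z) :
    ∃ e : Y.carrier ≃ Z.carrier, (∀ x, e (Y.op x) = Z.op (e x)) ∧
      e (fixPt Y hf) = fixPt Z hf' := by
  obtain ⟨e, he⟩ := h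
  refine ⟨e, he, fix_unique hZ' ?_ fixPt_fixed⟩
  rw [← he, fixPt_fixed]

lemma eq_pointed (h : Y = Z) (hf : ∃ z, Y.op z = z) (hf' : ∃ z, Z.op z = z) :
    ∃ e : Y.carrier ≃ Z.carrier, (∀ x, e (Y.op x) = Z.op (e x)) ∧
      e (fixPt Y hf) = fixPt Z hf' := by
  subst h
  exact ⟨Equiv.refl _, fun _ => rfl, rfl⟩

lemma cpath_cons {k : ℕ} (h : CPath n X Y (k + 1)) :
    ∃ Z, Good n Z ∧ Step X Z ∧ CPath n Z Y k := by
  obtain ⟨C, hg, h0, h1, hs⟩ := h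
  refine ⟨C 1, hg 1 (by omega), (hs 0 (by omega)).congr_left h0.symm,
    fun i => C (i + 1), fun i hi => hg (i + 1) (by omega), Iso.refl _, h1,
    fun i hi => hs (i + 1) (by omega)⟩

lemma hasPath_single (h : Step X Z) : HasPath X Z 1 := by
  refine ⟨fun i => if i = 0 then X else Z, by simp [Iso.refl], by simp [Iso.refl], ?_⟩
  intro i hi
  have : i = 0 := by omega
  subst this
  simpa using h

lemma hasPath_cons {m : ℕ} (h : Step X Z) (hp : HasPath Z Y m) : HasPath X Y (m + 1) := by
  have := hasPath_concat (hasPath_single h) hp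
  rwa [Nat.add_comm] at this

end MonoUnary
namespace MonoUnary

variable {n : ℕ} [NeZero n]

lemma glue_path (V : Fin n → MonoUnary) (hV : ∀ i, Good 1 (V i)) :
    ∀ (N : ℕ) (U : Fin n → MonoUnary) (hU : ∀ i, Good 1 (U i)) (κ : Fin n → ℕ),
      (∀ i, CPath 1 (U i) (V i) (κ i)) → (∑ i, κ i) = N →
      HasPath (glue n U (fun i => fixPt (U i) (good_one_fix (hU i))))
        (glue n V (fun i => fixPt (V i) (good_one_fix (hV i)))) N := by
  intro N
  induction N with
  | zero =>
    intro U hU κ hκ hsum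
    apply hasPath_of_iso
    apply glue_iso_cong
    intro i
    have hz : κ i = 0 := by
      have := Finset.sum_eq_zero_iff.mp hsum
      exact this i (Finset.mem_univ i)
    have h0 := hκ i
    rw [hz] at h0
    obtain ⟨C, hg, hc0, hc1, -⟩ := h0
    exact iso_pointed (hV i).1 (hc0.symm.trans hc1) (good_one_fix (hU i)) (good_one_fix (hV i))
  | succ N ih =>
    intro U hU κ hκ hsum
    have hex : ∃ i₀, 0 < κ i₀ := by
      by_contra hc
      push_neg at hc
      have : ∑ i, κ i = 0 := Finset.sum_eq_zero (fun i _ => by have := hc i; omega)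
      omega
    obtain ⟨i₀, hi₀⟩ := hex
    obtain ⟨k₀, hk₀⟩ : ∃ k₀, κ i₀ = k₀ + 1 := ⟨κ i₀ - 1, by omega⟩
    have h1 := hκ i₀
    rw [hk₀] at h1
    obtain ⟨Z, hZg, hZs, hZp⟩ := cpath_cons h1
    classical
    set U' : Fin n → MonoUnary := fun i => if i = i₀ then Z else U i with hU'
    have hU'eq : U' i₀ = Z := if_pos rfl
    have hU'ne : ∀ i, i ≠ i₀ → U' i = U i := fun i h => if_neg h
    have hU'g : ∀ i, Good 1 (U' i) := by
      intro i
      by_cases h : i = i₀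
      · subst h; rw [hU'eq]; exact hZg
      · rw [hU'ne i h]; exact hU i
    set κ' : Fin n → ℕ := fun i => if i = i₀ then k₀ else κ i with hκ'def
    have hκ'c : ∀ i, CPath 1 (U' i) (V i) (κ' i) := by
      intro i
      by_cases h : i = i₀
      · subst h
        show CPath 1 (U' i) (V i) (if i = i then k₀ else κ i)
        rw [if_pos rfl]
        exact hZp.congr_left (iso_of_eq hU'eq)
      · show CPath 1 (U' i) (V i) (if i = i₀ then k₀ else κ i)
        rw [if_neg h]
        exact (hκ i).congr_left (iso_of_eq (hU'ne i h))
    have hsum' : ∑ i, κ' i = N := by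
      have he1 : κ' = Function.update κ i₀ k₀ := by
        funext i
        rw [Function.update_apply]
      rw [he1, Finset.sum_update_of_mem (Finset.mem_univ i₀), Finset.sdiff_singleton_eq_erase]
      rw [← Finset.add_sum_erase Finset.univ κ (Finset.mem_univ i₀)] at hsum
      omega
    have hstep0 : Step (U i₀) (U' i₀) := hZs.congr_right (iso_of_eq hU'eq)
    have hq : ∀ i, (U i).op (fixPt (U i) (good_one_fix (hU i))) = fixPt (U i) (good_one_fix (hU i)) :=
      fun i => fixPt_fixed
    have hq' : ∀ i, (U' i).op (fixPt (U' i) (good_one_fix (hU'g i))) = fixPt (U' i) (good_one_fix (hU'g i)) :=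
      fun i => fixPt_fixed
    have hstep : Step (glue n U (fun i => fixPt (U i) (good_one_fix (hU i))))
        (glue n U' (fun i => fixPt (U' i) (good_one_fix (hU'g i)))) := by
      rcases hstep0 with hL | hL
      · rw [largeEmb_iff] at hL
        obtain ⟨hne, v, b, hv, hgen⟩ := hL
        refine Or.inl (glue_lemb _ _ i₀ hq hq' ?_ v b hv hgen ?_)
        · exact fun i h => eq_pointed (hU'ne i h).symm _ _
        · refine fix_unique (hU'g i₀).1 ?_ fixPt_fixed
          rw [← hv.2, fixPt_fixed]
      · rw [largeEmb_iff] at hL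
        obtain ⟨hne, v, b, hv, hgen⟩ := hL
        refine Or.inr (glue_lemb _ _ i₀ hq' hq ?_ v b hv hgen ?_)
        · exact fun i h => eq_pointed (hU'ne i h) _ _
        · refine fix_unique (hU i₀).1 ?_ fixPt_fixed
          rw [← hv.2, fixPt_fixed]
    exact hasPath_cons hstep (ih U' hU'g κ' hκ'c hsum')

end MonoUnary
namespace MonoUnary

variable {n : ℕ} [NeZero n] {A B : MonoUnary}

lemma dis_le_sum
    (hAconn : Connected A) (hBconn : Connected B)
    (rA : Fin n → A.carrier) (rB : Fin n → B.carrier)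
    (hrAinj : Function.Injective rA) (hrBinj : Function.Injective rB)
    (hrA : ∀ i, A.op (rA i) = rA (i + 1)) (hrB : ∀ i, B.op (rB i) = rB (i + 1)) (k : Fin n) :
    dis A B ≤ ∑ i : Fin n, dis (A.treeComp rA i) (B.treeComp rB (i + k)) := by
  by_cases hfin : ∀ i, dis (A.treeComp rA i) (B.treeComp rB (i + k)) ≠ ⊤
  · have hcp : ∀ i, ∃ κi : ℕ, (κi : ℕ∞) ≤ dis (A.treeComp rA i) (B.treeComp rB (i + k)) ∧
        CPath 1 (A.treeComp rA i) (B.treeComp rB (i + k)) κi := by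
      intro i
      obtain ⟨m, hm, hp⟩ := dis_attained (hfin i)
      obtain ⟨κi, hκle, hκ⟩ := normalize_path (good_tree rA i) (good_tree rB (i + k)) hp
      exact ⟨κi, by rw [← hm]; exact_mod_cast hκle, hκ⟩
    choose κ hκle hκ using hcp
    have hU : ∀ i, Good 1 (A.treeComp rA i) := good_tree rA
    have hV : ∀ i, Good 1 (B.treeComp rB (i + k)) := fun i => good_tree rB (i + k)
    have hpath := glue_path (fun i => B.treeComp rB (i + k)) hV (∑ i, κ i)
      (fun i => A.treeComp rA i) hU κ hκ rfl
    have hptsA : ∀ i, fixPt (A.treeComp rA i) (good_one_fix (hU i)) = treeRoot rA i :=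
      fun i => fix_unique (good_tree rA i).1 fixPt_fixed (treeRoot_fixed rA i)
    have hptsB : ∀ i, fixPt (B.treeComp rB (i + k)) (good_one_fix (hV i)) = treeRoot rB (i + k) :=
      fun i => fix_unique (good_tree rB (i + k)).1 fixPt_fixed (treeRoot_fixed rB (i + k))
    have hisoA : Iso A (glue n (fun i => A.treeComp rA i)
        (fun i => fixPt (A.treeComp rA i) (good_one_fix (hU i)))) :=
      glue_iso rA hAconn hrA hrAinj id Function.bijective_id (fun i => rfl) _ hptsA
    have hisoB : Iso B (glue n (fun i => B.treeComp rB (i + k))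
        (fun i => fixPt (B.treeComp rB (i + k)) (good_one_fix (hV i)))) :=
      glue_iso rB hBconn hrB hrBinj (fun i => i + k) (Equiv.addRight k).bijective
        (fun i => add_right_comm i k 1) _ hptsB
    have hAB : HasPath A B (∑ i, κ i) :=
      hasPath_congr_left hisoA (hasPath_congr_right hisoB hpath)
    calc dis A B ≤ ((∑ i, κ i : ℕ) : ℕ∞) := dis_le_of_hasPath hAB
      _ = ∑ i, ((κ i : ℕ) : ℕ∞) := Nat.cast_sum _ _
      _ ≤ ∑ i : Fin n, dis (A.treeComp rA i) (B.treeComp rB (i + k)) :=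
          Finset.sum_le_sum (fun i _ => hκle i)
  · push_neg at hfin
    obtain ⟨i, hi⟩ := hfin
    have h2 : (⊤ : ℕ∞) ≤ ∑ i : Fin n, dis (A.treeComp rA i) (B.treeComp rB (i + k)) := by
      rw [← hi]
      exact Finset.single_le_sum (f := fun i => dis (A.treeComp rA i) (B.treeComp rB (i + k)))
        (fun i _ => zero_le) (Finset.mem_univ i)
    exact le_trans le_top h2

end MonoUnary
namespace MonoUnary

variable {n : ℕ} [NeZero n] {B C X Y Z : MonoUnary}

lemma dis_comm_le : dis X Y ≤ dis Y X := by
  by_cases h : dis Y X = ⊤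
  · rw [h]; exact le_top
  · obtain ⟨m, hm, hp⟩ := dis_attained h
    rw [← hm]
    exact dis_le_of_hasPath (hasPath_symm hp)

lemma dis_comm : dis X Y = dis Y X := le_antisymm dis_comm_le dis_comm_le

lemma dis_le_zero_of_iso (h : Iso X Y) : dis X Y ≤ 0 := by
  have := dis_le_of_hasPath (hasPath_of_iso h)
  simpa using this

lemma dis_le_one_of_step (h : Step X Y) : dis X Y ≤ 1 := by
  have := dis_le_of_hasPath (hasPath_single h)
  simpa using this

lemma exists_cycle (hg : Good n Z) :
    ∃ r : Fin n → Z.carrier, Function.Injective r ∧ ∀ i, Z.op (r i) = r (i + 1) := by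
  obtain ⟨a, ha⟩ := hg.exists_ncyc
  have hn : 0 < n := hg.2.1
  have hmod : ∀ m : ℕ, Z.op^[m] a = Z.op^[m % n] a := by
    intro m
    conv_lhs => rw [show m = m % n + n * (m / n) by
      have := Nat.mod_add_div m n; omega]
    rw [Function.iterate_add_apply, per_iterate ha.1]
  have haux : ∀ i j : ℕ, i < j → j < n → Z.op^[i] a = Z.op^[j] a → False := by
    intro i j hij hjn heq
    have h1 : Z.op^[n - j + i] a = a := by
      rw [Function.iterate_add_apply, heq, ← Function.iterate_add_apply,
        Nat.sub_add_cancel (le_of_lt hjn)]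
      exact ha.1
    have h2 := ha.2 (n - j + i) (by omega) h1
    omega
  refine ⟨fun i => Z.op^[i.val] a, ?_, ?_⟩
  · intro i j hij
    by_contra hne
    rcases Nat.lt_trichotomy i.val j.val with h | h | h
    · exact haux i.val j.val h j.isLt hij
    · exact hne (Fin.ext h)
    · exact haux j.val i.val h i.isLt hij.symm
  · intro i
    show Z.op (Z.op^[i.val] a) = Z.op^[(i + 1).val] a
    have hval : (i + 1 : Fin n).val = (i.val + 1) % n := by
      rw [Fin.add_def, Fin.val_one']
      conv_rhs => rw [Nat.add_mod]
      rw [Nat.mod_eq_of_lt i.isLt]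
    rw [← Function.iterate_succ_apply' Z.op, hmod (i.val + 1), hval]

lemma tree_iterate_of_ne {X : MonoUnary} (r : Fin n → X.carrier) {i : Fin n}
    (x : (X.treeComp r i).carrier) (m : ℕ) (h : ∀ t < m, X.op^[t] x.1 ≠ r i) :
    ((X.treeComp r i).op^[m] x).1 = X.op^[m] x.1 := by
  induction m with
  | zero => rfl
  | succ m ih =>
    have hy := ih (fun t ht => h t (by omega))
    have hne : ((X.treeComp r i).op^[m] x).1 ≠ r i := by rw [hy]; exact h m (by omega)
    rw [Function.iterate_succ_apply', Function.iterate_succ_apply' X.op,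
      treeComp_op_ne r _ hne, hy]

end MonoUnary
namespace MonoUnary
open Fin.NatCast

variable {n : ℕ} [NeZero n] {B C : MonoUnary}

section CoreSetup

variable {v : B.carrier → C.carrier}
variable (rB : Fin n → B.carrier) (rC : Fin n → C.carrier)

/-- cycles map to cycles with a shift, and trees correspond -/
lemma core_setup (hv : Emb B C v)
    (hBconn : Connected B) (hCconn : Connected C)
    (hBcore : HasCoreC B n) (hCcore : HasCoreC C n)
    (hrBinj : Function.Injective rB) (hrCinj : Function.Injective rC)
    (hrB : ∀ i, B.op (rB i) = rB (i + 1)) (hrC : ∀ i, C.op (rC i) = rC (i + 1)) :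
    ∃ k₀ : Fin n, (∀ i, v (rB i) = rC (i + k₀)) ∧
      (∀ (i : Fin n) (x : B.carrier), x ∈ B.treeSet rB i ↔ v x ∈ C.treeSet rC (i + k₀)) ∧
      Set.range rC ⊆ Set.range v := by
  have hn : 0 < n := hBcore.1
  have hNB : ∀ i, NCyc n B (rB i) := ncyc_r rB hrBinj hrB hBcore
  have hper : C.op^[n] (v (rB 0)) = v (rB 0) := (hv.ncyc.mp (hNB 0)).1
  obtain ⟨k₀, hk₀⟩ := periodic_mem_range rC hrC hCconn hn hper
  have hnat : ∀ m : ℕ, v (rB (m : Fin n)) = rC ((m : Fin n) + k₀) := by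
    intro m
    induction m with
    | zero => simpa using hk₀.symm
    | succ m ih =>
      have hc : ((m + 1 : ℕ) : Fin n) = (m : Fin n) + 1 := by push_cast; ring
      rw [hc, ← hrB, hv.2, ih, hrC, add_right_comm]
  have hvr : ∀ i, v (rB i) = rC (i + k₀) := by
    intro i
    have := hnat i.val
    rwa [Fin.cast_val_eq_self] at this
  have hsub : Set.range rC ⊆ Set.range v := by
    rintro y ⟨j, rfl⟩
    refine ⟨rB (j - k₀), ?_⟩
    rw [hvr, sub_add_cancel]
  have hhit : ∀ (t : ℕ) (x : B.carrier),
      B.op^[t] x ∈ Set.range rB ↔ C.op^[t] (v x) ∈ Set.range rC := by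
    intro t x
    constructor
    · rintro ⟨u, hu⟩
      refine ⟨u + k₀, ?_⟩
      rw [← hvr, hu, hv.iterate]
    · rintro ⟨w, hw⟩
      have h1 : v (rB (w - k₀)) = v (B.op^[t] x) := by
        rw [hvr, sub_add_cancel, hw, hv.iterate]
      exact ⟨w - k₀, hv.1 h1⟩
  refine ⟨k₀, hvr, ?_, hsub⟩
  intro i x
  constructor
  · rintro ⟨t, ht, hmin⟩
    refine ⟨t, ?_, ?_⟩
    · rw [← hv.iterate, ht, hvr]
    · intro j hj hcon
      exact hmin j hj ((hhit j x).mpr hcon)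
  · rintro ⟨t, ht, hmin⟩
    refine ⟨t, ?_, ?_⟩
    · apply hv.1
      rw [hv.iterate, ht, hvr]
    · intro j hj hcon
      exact hmin j hj ((hhit j x).mp hcon)

/-- the embedding of tree algebras induced by `v` -/
lemma tree_map (hv : Emb B C v) {k₀ : Fin n}
    (hvr : ∀ i, v (rB i) = rC (i + k₀))
    (htree : ∀ (i : Fin n) (x : B.carrier), x ∈ B.treeSet rB i ↔ v x ∈ C.treeSet rC (i + k₀))
    (i : Fin n) :
    ∃ T : (B.treeComp rB i).carrier → (C.treeComp rC (i + k₀)).carrier,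
      Emb (B.treeComp rB i) (C.treeComp rC (i + k₀)) T ∧ (∀ x, (T x).1 = v x.1) := by
  refine ⟨fun x => ⟨v x.1, (htree i x.1).mp x.2⟩, ⟨?_, ?_⟩, fun x => rfl⟩
  · intro x y hxy
    exact Subtype.ext (hv.1 (congrArg Subtype.val hxy))
  · intro x
    by_cases hroot : x.1 = rB i
    · have h1 : (B.treeComp rB i).op x = x := treeComp_op_root rB x hroot
      have h2 : (C.treeComp rC (i + k₀)).op ⟨v x.1, (htree i x.1).mp x.2⟩ =
          ⟨v x.1, (htree i x.1).mp x.2⟩ := by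
        apply treeComp_op_root rC
        show v x.1 = rC (i + k₀)
        rw [hroot, hvr]
      rw [h1, h2]
    · have h2 : v x.1 ≠ rC (i + k₀) := by
        intro hcon
        apply hroot
        apply hv.1
        rw [hcon, ← hvr]
      apply Subtype.ext
      show v (((B.treeComp rB i).op x).1) = ((C.treeComp rC (i + k₀)).op _).1
      erw [treeComp_op_ne rB x hroot, treeComp_op_ne rC _ h2]
      exact hv.2 x.1

/-- the iso version : if `v` is surjective all tree maps are isomorphisms -/
lemma core_iso (hiso : Iso B C)
    (hBconn : Connected B) (hCconn : Connected C)
    (hBcore : HasCoreC B n) (hCcore : HasCoreC C n)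
    (hrBinj : Function.Injective rB) (hrCinj : Function.Injective rC)
    (hrB : ∀ i, B.op (rB i) = rB (i + 1)) (hrC : ∀ i, C.op (rC i) = rC (i + 1)) :
    ∃ k₀ : Fin n, ∀ i : Fin n, Iso (B.treeComp rB i) (C.treeComp rC (i + k₀)) := by
  obtain ⟨e, he⟩ := hiso
  have hv : Emb B C e := ⟨e.injective, he⟩
  obtain ⟨k₀, hvr, htree, -⟩ :=
    core_setup rB rC hv hBconn hCconn hBcore hCcore hrBinj hrCinj hrB hrC
  refine ⟨k₀, fun i => ?_⟩
  obtain ⟨T, hT, hTval⟩ := tree_map rB rC hv hvr htree i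
  apply iso_of_bij hT
  rintro ⟨y, hy⟩
  have hy2 : e (e.symm y) ∈ C.treeSet rC (i + k₀) := by rwa [Equiv.apply_symm_apply]
  have hx : e.symm y ∈ B.treeSet rB i := (htree i (e.symm y)).mpr hy2
  refine ⟨⟨e.symm y, hx⟩, ?_⟩
  apply Subtype.ext
  erw [hTval]
  exact Equiv.apply_symm_apply e y

end CoreSetup

end MonoUnary
namespace MonoUnary

variable {n : ℕ} [NeZero n] {B C : MonoUnary}

lemma core_step {v : B.carrier → C.carrier} {b : C.carrier}
    (hv : Emb B C v) (hgen : C.closure (Set.range v ∪ {b}) = Set.univ)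
    (hBconn : Connected B) (hCconn : Connected C)
    (hBcore : HasCoreC B n) (hCcore : HasCoreC C n)
    (rB : Fin n → B.carrier) (rC : Fin n → C.carrier)
    (hrBinj : Function.Injective rB) (hrCinj : Function.Injective rC)
    (hrB : ∀ i, B.op (rB i) = rB (i + 1)) (hrC : ∀ i, C.op (rC i) = rC (i + 1)) :
    ∃ k₀ : Fin n, ∑ i : Fin n, dis (B.treeComp rB i) (C.treeComp rC (i + k₀)) ≤ 1 := by
  obtain ⟨k₀, hvr, htree, hsub⟩ :=
    core_setup rB rC hv hBconn hCconn hBcore hCcore hrBinj hrCinj hrB hrC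
  have hcl := closure_union_singleton hv.range_closed b
  have hmemC : ∀ y : C.carrier, y ∈ Set.range v ∪ {z | ∃ t, C.op^[t] b = z} := by
    intro y; rw [← hcl, hgen]; trivial
  obtain ⟨ib, hib⟩ := treeSet_cover rC hCconn hrC b
  obtain ⟨K, hbK, hKmin⟩ := hib
  have hib' : b ∈ C.treeSet rC ib := ⟨K, hbK, hKmin⟩
  set istar := ib - k₀ with histar_def
  have histar : istar + k₀ = ib := sub_add_cancel ib k₀
  -- facts about the trajectory of b
  have htKle : ∀ t : ℕ, C.op^[t] b ∉ Set.range v → t ≤ K := by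
    intro t ht
    by_contra hc
    apply ht
    apply hsub
    rw [show t = (t - K) + K by omega, Function.iterate_add_apply, hbK,
      cycle_iterate rC hrC]
    exact ⟨_, rfl⟩
  have htreeb : ∀ t, t ≤ K → C.op^[t] b ∈ C.treeSet rC ib := by
    intro t ht
    refine ⟨K - t, ?_, ?_⟩
    · rw [← Function.iterate_add_apply, Nat.sub_add_cancel ht]
      exact hbK
    · intro j hj
      rw [← Function.iterate_add_apply]
      exact hKmin (j + t) (by omega)
  have hneroot : ∀ t : ℕ, C.op^[t] b ∉ Set.range v →
      ∀ t' < t, C.op^[t'] b ≠ rC (istar + k₀) := by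
    intro t ht t' ht' hcon
    apply ht
    apply hsub
    rw [show t = (t - t') + t' by omega, Function.iterate_add_apply, hcon,
      cycle_iterate rC hrC]
    exact ⟨_, rfl⟩
  have hbmem : b ∈ C.treeSet rC (istar + k₀) := by rw [histar]; exact hib'
  -- the per-tree bound
  have hbound : ∀ i : Fin n, dis (B.treeComp rB i) (C.treeComp rC (i + k₀)) ≤
      (if i = istar then (1 : ℕ∞) else 0) := by
    intro i
    obtain ⟨T, hT, hTval⟩ := tree_map rB rC hv hvr htree i
    by_cases hi : i = istar
    · subst hi
      rw [if_pos rfl]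
      apply dis_le_one_of_step
      apply Or.inl
      rw [largeEmb_iff]
      refine ⟨⟨treeRoot rB istar⟩, T, ⟨b, hbmem⟩, hT, ?_⟩
      apply Set.eq_univ_of_forall
      rintro ⟨y, hy⟩
      rcases hmemC y with ⟨u, rfl⟩ | ⟨t, rfl⟩
      · exact mem_closure_self (Or.inl ⟨⟨u, (htree istar u).mpr hy⟩, Subtype.ext (hTval _)⟩)
      · by_cases hrv : C.op^[t] b ∈ Set.range v
        · obtain ⟨u, hu⟩ := hrv
          have hy2 : v u ∈ C.treeSet rC (istar + k₀) := by rw [hu]; exact hy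
          refine mem_closure_self (Or.inl ⟨⟨u, (htree istar u).mpr hy2⟩, ?_⟩)
          apply Subtype.ext
          erw [hTval]
          exact hu
        · refine ⟨⟨b, hbmem⟩, Or.inr rfl, t, ?_⟩
          apply Subtype.ext
          rw [tree_iterate_of_ne rC ⟨b, hbmem⟩ t (hneroot t hrv)]
    · rw [if_neg hi]
      apply dis_le_zero_of_iso
      apply iso_of_bij hT
      rintro ⟨y, hy⟩
      rcases hmemC y with ⟨u, rfl⟩ | ⟨t, rfl⟩
      · exact ⟨⟨u, (htree i u).mpr hy⟩, Subtype.ext (hTval _)⟩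
      · by_cases hrv : C.op^[t] b ∈ Set.range v
        · obtain ⟨u, hu⟩ := hrv
          have hy2 : v u ∈ C.treeSet rC (i + k₀) := by rw [hu]; exact hy
          refine ⟨⟨u, (htree i u).mpr hy2⟩, ?_⟩
          apply Subtype.ext
          erw [hTval]
          exact hu
        · exfalso
          have ht : t ≤ K := htKle t hrv
          have h1 : C.op^[t] b ∈ C.treeSet rC ib := htreeb t ht
          have h2 : i + k₀ = ib := treeSet_disjoint rC hy h1 hrCinj
          apply hi
          have := h2.trans histar.symm
          exact add_right_cancel this
  refine ⟨k₀, ?_⟩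
  calc ∑ i : Fin n, dis (B.treeComp rB i) (C.treeComp rC (i + k₀))
      ≤ ∑ i : Fin n, (if i = istar then (1 : ℕ∞) else 0) :=
        Finset.sum_le_sum (fun i _ => hbound i)
    _ = 1 := by
        rw [Finset.sum_ite_eq' Finset.univ istar (fun _ => (1 : ℕ∞))]
        simp

end MonoUnary
namespace MonoUnary

variable {n : ℕ} [NeZero n]

lemma iInf_fin_attain (f : Fin n → ℕ∞) : ∃ k, (⨅ j, f j) = f k := by
  obtain ⟨k, hk⟩ := Finite.exists_min f
  exact ⟨k, le_antisymm (iInf_le f k) (le_iInf hk)⟩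

lemma dstep {A Z : MonoUnary} (hA : Good n A) (hZ : Good n Z)
    (rA : Fin n → A.carrier) (rZ : Fin n → Z.carrier)
    (hrAinj : Function.Injective rA) (hrZinj : Function.Injective rZ)
    (hrA : ∀ i, A.op (rA i) = rA (i + 1)) (hrZ : ∀ i, Z.op (rZ i) = rZ (i + 1))
    (hs : Step A Z) :
    ⨅ k : Fin n, ∑ i : Fin n, dis (A.treeComp rA i) (Z.treeComp rZ (i + k)) ≤ 1 := by
  rcases hs with hL | hL
  · rw [largeEmb_iff] at hL
    obtain ⟨-, v, b, hv, hgen⟩ := hL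
    obtain ⟨k₀, hk₀⟩ := core_step hv hgen hA.1 hZ.1 hA.2 hZ.2 rA rZ hrAinj hrZinj hrA hrZ
    exact le_trans (iInf_le _ k₀) hk₀
  · rw [largeEmb_iff] at hL
    obtain ⟨-, v, b, hv, hgen⟩ := hL
    obtain ⟨k₀, hk₀⟩ := core_step hv hgen hZ.1 hA.1 hZ.2 hA.2 rZ rA hrZinj hrAinj hrZ hrA
    refine le_trans (iInf_le _ (-k₀)) ?_
    have hre : ∑ i : Fin n, dis (A.treeComp rA i) (Z.treeComp rZ (i + -k₀)) =
        ∑ j : Fin n, dis (Z.treeComp rZ j) (A.treeComp rA (j + k₀)) := by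
      apply Fintype.sum_equiv (Equiv.addRight (-k₀))
      intro i
      show dis (A.treeComp rA i) (Z.treeComp rZ (i + -k₀)) =
        dis (Z.treeComp rZ (i + -k₀)) (A.treeComp rA ((i + -k₀) + k₀))
      rw [neg_add_cancel_right]
      exact dis_comm
    rw [hre]
    exact hk₀

lemma cpath_D_le {B : MonoUnary} (hB : Good n B) (rB : Fin n → B.carrier)
    (hrBinj : Function.Injective rB) (hrB : ∀ i, B.op (rB i) = rB (i + 1)) :
    ∀ (m : ℕ) (A : MonoUnary), Good n A → ∀ (rA : Fin n → A.carrier),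
      Function.Injective rA → (∀ i, A.op (rA i) = rA (i + 1)) → CPath n A B m →
      (⨅ k : Fin n, ∑ i : Fin n, dis (A.treeComp rA i) (B.treeComp rB (i + k))) ≤ (m : ℕ∞) := by
  intro m
  induction m with
  | zero =>
    intro A hA rA hrAinj hrA hcp
    obtain ⟨C, hg, hc0, hc1, -⟩ := hcp
    have hiso : Iso A B := hc0.symm.trans hc1
    obtain ⟨k₀, hk₀⟩ := core_iso rA rB hiso hA.1 hB.1 hA.2 hB.2 hrAinj hrBinj hrA hrB
    refine le_trans (iInf_le _ k₀) ?_
    calc ∑ i : Fin n, dis (A.treeComp rA i) (B.treeComp rB (i + k₀))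
        ≤ ∑ _i : Fin n, (0 : ℕ∞) :=
          Finset.sum_le_sum (fun i _ => dis_le_zero_of_iso (hk₀ i))
      _ = 0 := by simp
      _ ≤ ((0 : ℕ) : ℕ∞) := by simp
  | succ m ih =>
    intro A hA rA hrAinj hrA hcp
    obtain ⟨Z, hZg, hs, hZp⟩ := cpath_cons hcp
    obtain ⟨rZ, hrZinj, hrZ⟩ := exists_cycle hZg
    obtain ⟨k1, hk1⟩ := iInf_fin_attain
      (fun k => ∑ i : Fin n, dis (A.treeComp rA i) (Z.treeComp rZ (i + k)))
    obtain ⟨k2, hk2⟩ := iInf_fin_attain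
      (fun k => ∑ i : Fin n, dis (Z.treeComp rZ i) (B.treeComp rB (i + k)))
    have h1 : ∑ i : Fin n, dis (A.treeComp rA i) (Z.treeComp rZ (i + k1)) ≤ 1 := by
      rw [← hk1]
      exact dstep hA hZg rA rZ hrAinj hrZinj hrA hrZ hs
    have h2 : ∑ i : Fin n, dis (Z.treeComp rZ i) (B.treeComp rB (i + k2)) ≤ (m : ℕ∞) := by
      rw [← hk2]
      exact ih Z hZg rZ hrZinj hrZ hZp
    refine le_trans (iInf_le _ (k1 + k2)) ?_
    have hpt : ∀ i : Fin n, dis (A.treeComp rA i) (B.treeComp rB (i + (k1 + k2))) ≤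
        dis (A.treeComp rA i) (Z.treeComp rZ (i + k1)) +
        dis (Z.treeComp rZ (i + k1)) (B.treeComp rB ((i + k1) + k2)) := by
      intro i
      rw [show i + (k1 + k2) = (i + k1) + k2 by abel]
      exact dis_triangle
    calc ∑ i : Fin n, dis (A.treeComp rA i) (B.treeComp rB (i + (k1 + k2)))
        ≤ ∑ i : Fin n, (dis (A.treeComp rA i) (Z.treeComp rZ (i + k1)) +
            dis (Z.treeComp rZ (i + k1)) (B.treeComp rB ((i + k1) + k2))) :=
          Finset.sum_le_sum (fun i _ => hpt i)
      _ = ∑ i : Fin n, dis (A.treeComp rA i) (Z.treeComp rZ (i + k1)) +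
            ∑ i : Fin n, dis (Z.treeComp rZ (i + k1)) (B.treeComp rB ((i + k1) + k2)) :=
          Finset.sum_add_distrib
      _ = ∑ i : Fin n, dis (A.treeComp rA i) (Z.treeComp rZ (i + k1)) +
            ∑ j : Fin n, dis (Z.treeComp rZ j) (B.treeComp rB (j + k2)) := by
          congr 1
          exact Fintype.sum_equiv (Equiv.addRight k1)
            (fun i => dis (Z.treeComp rZ (i + k1)) (B.treeComp rB ((i + k1) + k2)))
            (fun j => dis (Z.treeComp rZ j) (B.treeComp rB (j + k2)))
            (fun i => rfl)
      _ ≤ 1 + (m : ℕ∞) := add_le_add h1 h2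
      _ = ((m + 1 : ℕ) : ℕ∞) := by push_cast; ring

end MonoUnary
open MonoUnary in
/-- for connected monounary algebras `A`, `B` with cores isomorphic to
`C_n` (`n` positive), with compatibly indexed tree-algebra decompositions along the
cycles `rA`, `rB`, the distance equals the minimum over cyclic shifts `k < n` of
`Σ_{i<n} dis (T^A_i) (T^B_{(i+k) mod n})`. -/
theorem dis_of_tree_decomposition (n : ℕ) [NeZero n] (A B : MonoUnary)
    (hAconn : Connected A) (hBconn : Connected B)
    (hAcore : HasCoreC A n) (hBcore : HasCoreC B n)
    (rA : Fin n → A.carrier) (rB : Fin n → B.carrier)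
    (hrAinj : Function.Injective rA) (hrBinj : Function.Injective rB)
    (hrA : ∀ i, A.op (rA i) = rA (i + 1)) (hrB : ∀ i, B.op (rB i) = rB (i + 1)) :
    dis A B = ⨅ k : Fin n, ∑ i : Fin n, dis (treeComp A rA i) (treeComp B rB (i + k)) := by
  have hA : Good n A := ⟨hAconn, hAcore⟩
  have hB : Good n B := ⟨hBconn, hBcore⟩
  apply le_antisymm
  · apply le_iInf
    intro k
    exact dis_le_sum hAconn hBconn rA rB hrAinj hrBinj hrA hrB k
  · by_cases h : dis A B = ⊤
    · rw [h]; exact le_top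
    obtain ⟨m, hm, hp⟩ := dis_attained h
    obtain ⟨kk, hkk, hcp⟩ := normalize_path hA hB hp
    have hD := cpath_D_le hB rB hrBinj hrB kk A hA rA hrAinj hrA hcp
    calc ⨅ k : Fin n, ∑ i : Fin n, dis (treeComp A rA i) (treeComp B rB (i + k))
        ≤ (kk : ℕ∞) := hD
      _ ≤ (m : ℕ∞) := by exact_mod_cast hkk
      _ = dis A B := hm
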